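/- Let G be a simple graph, v a vertex of G, and k ≥ 1 an integer. Then the edge-path group E(N^k[G], v) of the closed k-neighborhood complex of G based at v is isomorphic to the closed 2k-fundamental group π₁^{2k}[G,v]. (Via the standard identification of the fundamental group of the geometric realization of a simplicial complex with its edge-path group, this is the isomorphism π₁(N^k[G], v) ≅ π₁^{2k}[G,v].) -/
import Mathlib



/-- A path of length `len` in a simple graph `G` from `v` to `w`: a function on `{0,…,len}`
(encoded as a function `ℕ → V` that is constantly `w` from index `len` on) whose consecutive
values are adjacent or equal. -/
structure GPath {V : Type*} (G : SimpleGraph V) (v w : V) where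
  len : ℕ
  toFun : ℕ → V
  source : toFun 0 = v
  target : toFun len = w
  step : ∀ i < len, G.Adj (toFun i) (toFun (i + 1)) ∨ toFun i = toFun (i + 1)
  junk : ∀ i, len ≤ i → toFun i = w

namespace GPath

variable {V : Type*} {G : SimpleGraph V}

/-- The constant path of length 0 at a vertex. -/
def refl (G : SimpleGraph V) (v : V) : GPath G v v where
  len := 0
  toFun := fun _ => v
  source := rfl
  target := rfl
  step := fun i hi => absurd hi (Nat.not_lt_zero i)
  junk := fun _ _ => rfl

/-- Concatenation of composable paths. -/
def concat {u v w : V} (γ : GPath G u v) (δ : GPath G v w) : GPath G u w where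
  len := γ.len + δ.len
  toFun := fun i => if i < γ.len then γ.toFun i else δ.toFun (i - γ.len)
  source := by
    by_cases h : 0 < γ.len
    · simpa [h] using γ.source
    · have h0 : γ.len = 0 := by omega
      have huv : u = v := by
        have h1 := γ.source; have h2 := γ.target
        rw [h0] at h2; rw [h1] at h2; exact h2
      show (if 0 < γ.len then γ.toFun 0 else δ.toFun (0 - γ.len)) = u
      rw [if_neg h, Nat.zero_sub, δ.source]
      exact huv.symm
  target := by
    have h : ¬ γ.len + δ.len < γ.len := by omega
    have h2 : γ.len + δ.len - γ.len = δ.len := by omega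
    simp only [h, if_false, h2, δ.target]
  step := by
    intro i hi
    by_cases h1 : i + 1 < γ.len
    · have h0 : i < γ.len := by omega
      simpa [h0, h1] using γ.step i h0
    · by_cases h0 : i < γ.len
      · -- i + 1 = γ.len
        have he : i + 1 = γ.len := by omega
        have h3 : i + 1 - γ.len = 0 := by omega
        have hval : δ.toFun (i + 1 - γ.len) = γ.toFun (i + 1) := by
          rw [h3, δ.source, he, γ.target]
        simp only [h0, if_true, h1, if_false, hval]
        exact γ.step i h0
      · have h3 : i + 1 - γ.len = (i - γ.len) + 1 := by omega
        simp only [h0, if_false, h1, if_false, h3]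
        exact δ.step (i - γ.len) (by omega)
  junk := by
    intro i hi
    have h : ¬ i < γ.len := by omega
    simp only [h, if_false]
    exact δ.junk _ (by omega)

/-- The reverse of a path: `γ̄(i) = γ(len − i)`. -/
def reverse {v w : V} (γ : GPath G v w) : GPath G w v where
  len := γ.len
  toFun := fun i => γ.toFun (γ.len - i)
  source := by simpa using γ.target
  target := by simpa using γ.source
  step := by
    intro i hi
    show G.Adj (γ.toFun (γ.len - i)) (γ.toFun (γ.len - (i + 1))) ∨
      γ.toFun (γ.len - i) = γ.toFun (γ.len - (i + 1))
    have h1 : γ.len - i = (γ.len - (i + 1)) + 1 := by omega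
    rcases γ.step (γ.len - (i + 1)) (by omega) with h | h
    · exact Or.inl (by rw [h1]; exact h.symm)
    · exact Or.inr (by rw [h1, ← h])
  junk := by
    intro i hi
    show γ.toFun (γ.len - i) = v
    have h : γ.len - i = 0 := by omega
    rw [h, γ.source]

end GPath

/-- Relation (A): `γ'` has length `l(γ) + 1` and agrees with `γ` up to an index `x` and,
shifted by one, from `x` on. -/
def RelA {V : Type*} {G : SimpleGraph V} {v w : V} (γ γ' : GPath G v w) : Prop :=
  γ'.len = γ.len + 1 ∧ ∃ x ≤ γ.len,
    (∀ i ≤ x, γ.toFun i = γ'.toFun i) ∧ (∀ i, x ≤ i → γ.toFun i = γ'.toFun (i + 1))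

/-- Relation (B)_k: `γ` and `γ'` have equal length and agree up to some index `i₀` and from
`i₀ + k` on. -/
def RelB {V : Type*} (k : ℕ) {G : SimpleGraph V} {v w : V} (γ γ' : GPath G v w) : Prop :=
  γ.len = γ'.len ∧ ∃ i₀ ≤ γ.len,
    (∀ i ≤ i₀, γ.toFun i = γ'.toFun i) ∧ (∀ i, i₀ + k ≤ i → γ.toFun i = γ'.toFun i)

/-- `≃_k`: the smallest equivalence relation on paths from `v` to `w` containing the
relations (A) and (B)_k.  The closed `k`-fundamental group `π₁^k[G,v]` is the quotient of
loops at `v` by `≃_k`. -/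
def CEq {V : Type*} (k : ℕ) {G : SimpleGraph V} {v w : V} : GPath G v w → GPath G v w → Prop :=
  Relation.EqvGen (fun γ γ' => RelA γ γ' ∨ RelB k γ γ')

/-- An edge-path of length `len` in a simplicial complex `K` (a family of finite subsets of
a vertex set `V`, with a simplex encoded as a finite `Set V`) from `v` to `w`: a sequence of
vertices (encoded as a function `ℕ → V` that is constantly `w` from index `len` on) such
that each pair of consecutive vertices spans a simplex of `K`. -/
structure EPath {V : Type*} (K : Set (Set V)) (v w : V) where
  len : ℕ
  toFun : ℕ → V
  source : toFun 0 = v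
  target : toFun len = w
  edge : ∀ i < len, ({toFun i, toFun (i + 1)} : Set V) ∈ K
  junk : ∀ i, len ≤ i → toFun i = w

namespace EPath

variable {V : Type*} {K : Set (Set V)}

/-- The constant edge-path of length 0 at a vertex. -/
def refl (K : Set (Set V)) (v : V) : EPath K v v where
  len := 0
  toFun := fun _ => v
  source := rfl
  target := rfl
  edge := fun i hi => absurd hi (Nat.not_lt_zero i)
  junk := fun _ _ => rfl

/-- Concatenation of composable edge-paths. -/
def concat {u v w : V} (γ : EPath K u v) (δ : EPath K v w) : EPath K u w where
  len := γ.len + δ.len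
  toFun := fun i => if i < γ.len then γ.toFun i else δ.toFun (i - γ.len)
  source := by
    by_cases h : 0 < γ.len
    · simpa [h] using γ.source
    · have h0 : γ.len = 0 := by omega
      have huv : u = v := by
        have h1 := γ.source; have h2 := γ.target
        rw [h0] at h2; rw [h1] at h2; exact h2
      show (if 0 < γ.len then γ.toFun 0 else δ.toFun (0 - γ.len)) = u
      rw [if_neg h, Nat.zero_sub, δ.source]
      exact huv.symm
  target := by
    have h : ¬ γ.len + δ.len < γ.len := by omega
    have h2 : γ.len + δ.len - γ.len = δ.len := by omega
    simp only [h, if_false, h2, δ.target]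
  edge := by
    intro i hi
    by_cases h1 : i + 1 < γ.len
    · have h0 : i < γ.len := by omega
      simpa [h0, h1] using γ.edge i h0
    · by_cases h0 : i < γ.len
      · have he : i + 1 = γ.len := by omega
        have h3 : i + 1 - γ.len = 0 := by omega
        have hval : δ.toFun (i + 1 - γ.len) = γ.toFun (i + 1) := by
          rw [h3, δ.source, he, γ.target]
        simp only [h0, if_true, h1, if_false, hval]
        exact γ.edge i h0
      · have h3 : i + 1 - γ.len = (i - γ.len) + 1 := by omega
        simp only [h0, if_false, h1, if_false, h3]
        exact δ.edge (i - γ.len) (by omega)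
  junk := by
    intro i hi
    have h : ¬ i < γ.len := by omega
    simp only [h, if_false]
    exact δ.junk _ (by omega)

end EPath

/-- `γ'` is obtained from the edge-path `γ` by deleting the vertex at position `j`. -/
def EDel {V : Type*} {K : Set (Set V)} {v w : V} (γ γ' : EPath K v w) (j : ℕ) : Prop :=
  γ.len = γ'.len + 1 ∧ (∀ i < j, γ'.toFun i = γ.toFun i) ∧
    (∀ i, j ≤ i → γ'.toFun i = γ.toFun (i + 1))

/-- One step of edge-path homotopy: delete a vertex `v_j` with `1 ≤ j` such that either
(a) `v_{j-1} = v_j`, or (b) `{v_{j-1}, v_j, v_{j+1}}` is a simplex of `K`. -/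
def EHomStep {V : Type*} (K : Set (Set V)) {v w : V} (γ γ' : EPath K v w) : Prop :=
  (∃ j, 1 ≤ j ∧ j ≤ γ.len ∧ γ.toFun (j - 1) = γ.toFun j ∧ EDel γ γ' j) ∨
  (∃ j, 1 ≤ j ∧ j + 1 ≤ γ.len ∧
    ({γ.toFun (j - 1), γ.toFun j, γ.toFun (j + 1)} : Set V) ∈ K ∧ EDel γ γ' j)

/-- Edge-path homotopy: the smallest equivalence relation containing the elementary
deletions (a) and (b).  The edge-path group `E(K,v)` is the quotient of the set of
edge-paths from `v` to `v` by this relation. -/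
def EHom {V : Type*} (K : Set (Set V)) {v w : V} : EPath K v w → EPath K v w → Prop :=
  Relation.EqvGen (EHomStep K)

/-- The closed neighborhood `N_G[v] = {v} ∪ N_G(v)` of a vertex in a simple graph. -/
def closedNbhd {V : Type*} (G : SimpleGraph V) (v : V) : Set V :=
  insert v (G.neighborSet v)

/-- The closed `k`-neighborhood `N_G^k[v]`, defined recursively by `N_G^0[v] = {v}` and
`N_G^{k+1}[v] = ⋃_{w ∈ N_G^k[v]} N_G[w]` (so `N_G^1[v] = N_G[v]`). -/
def closedKNbhd {V : Type*} (G : SimpleGraph V) : ℕ → V → Set V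
  | 0, v => {v}
  | k + 1, v => ⋃ w ∈ closedKNbhd G k v, closedNbhd G w

/-- The closed `k`-neighborhood complex `N^k[G]`: the family of finite vertex sets contained
in the closed `k`-neighborhood of some vertex. -/
def closedKNbhdComplex {V : Type*} (G : SimpleGraph V) (k : ℕ) : Set (Set V) :=
  {σ : Set V | σ.Finite ∧ ∃ v : V, σ ⊆ closedKNbhd G k v}

section Aux

variable {V : Type*} {G : SimpleGraph V}

/-- Adjacent or equal. -/
abbrev AdjE (G : SimpleGraph V) (x y : V) : Prop := G.Adj x y ∨ x = y

lemma AdjE.refl' (x : V) : AdjE G x x := Or.inr rfl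

lemma AdjE.symm' {x y : V} (h : AdjE G x y) : AdjE G y x := by
  rcases h with h | h
  · exact Or.inl h.symm
  · exact Or.inr h.symm

lemma adjE_of_eq {x y : V} (h : x = y) : AdjE G x y := Or.inr h

lemma mem_closedKNbhd_iff {n : ℕ} {u a : V} :
    a ∈ closedKNbhd G n u ↔
      ∃ f : ℕ → V, f 0 = u ∧ f n = a ∧ ∀ i < n, AdjE G (f i) (f (i + 1)) := by
  induction n generalizing a with
  | zero =>
    constructor
    · intro h
      have : a = u := h
      exact ⟨fun _ => u, rfl, this.symm, fun i hi => absurd hi (Nat.not_lt_zero i)⟩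
    · rintro ⟨f, h0, hn, _⟩
      simp only [closedKNbhd, Set.mem_singleton_iff]
      rw [← hn, h0]
  | succ n ih =>
    constructor
    · intro h
      simp only [closedKNbhd, Set.mem_iUnion] at h
      obtain ⟨w, hw, haw⟩ := h
      obtain ⟨f, h0, hn, hs⟩ := ih.mp hw
      refine ⟨fun i => if i ≤ n then f i else a, by simp [h0], by simp, ?_⟩
      intro i hi
      by_cases hin : i + 1 ≤ n
      · have : i ≤ n := by omega
        simpa [this, hin] using hs i (by omega)
      · have hie : i = n := by omega
        show AdjE G (if i ≤ n then f i else a) (if i + 1 ≤ n then f (i + 1) else a)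
        rw [if_pos (by omega : i ≤ n), if_neg hin, hie, hn]
        rcases haw with h1 | h2
        · exact Or.inr h1.symm
        · exact Or.inl ((G.mem_neighborSet w a).mp h2)
    · rintro ⟨f, h0, hn, hs⟩
      simp only [closedKNbhd, Set.mem_iUnion]
      refine ⟨f n, ih.mpr ⟨f, h0, rfl, fun i hi => hs i (by omega)⟩, ?_⟩
      rcases hs n (by omega) with h1 | h2
      · right
        rw [← hn]
        exact (G.mem_neighborSet (f n) (f (n + 1))).mpr h1
      · left
        rw [← hn, h2]

lemma mem_of_walk_le {f : ℕ → V} {a b n : ℕ} (hab : a ≤ b) (hn : b - a ≤ n)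
    (hs : ∀ i, a ≤ i → i < b → AdjE G (f i) (f (i + 1))) :
    f b ∈ closedKNbhd G n (f a) := by
  rw [mem_closedKNbhd_iff]
  refine ⟨fun i => f (if a + i ≤ b then a + i else b), ?_, ?_, ?_⟩
  · show f (if a + 0 ≤ b then a + 0 else b) = f a
    rw [if_pos (by omega)]
    congr 1
  · show f (if a + n ≤ b then a + n else b) = f b
    by_cases h : a + n ≤ b
    · rw [if_pos h]
      congr 1
      omega
    · rw [if_neg h]
  · intro i hi
    show AdjE G (f (if a + i ≤ b then a + i else b)) (f (if a + (i + 1) ≤ b then a + (i + 1) else b))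
    by_cases h : a + i < b
    · rw [if_pos (by omega), if_pos (by omega : a + (i+1) ≤ b)]
      have : a + (i + 1) = (a + i) + 1 := by omega
      rw [this]
      exact hs (a + i) (by omega) h
    · by_cases h2 : a + i ≤ b
      · have hb : a + i = b := by omega
        rw [if_pos h2, if_neg (by omega), hb]
        exact AdjE.refl' _
      · rw [if_neg h2, if_neg (by omega)]
        exact AdjE.refl' _

lemma mem_of_walk_ge {f : ℕ → V} {a b n : ℕ} (hab : a ≤ b) (hn : b - a ≤ n)
    (hs : ∀ i, a ≤ i → i < b → AdjE G (f i) (f (i + 1))) :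
    f a ∈ closedKNbhd G n (f b) := by
  rw [mem_closedKNbhd_iff]
  refine ⟨fun i => f (if i ≤ b - a then b - i else a), ?_, ?_, ?_⟩
  · show f (if 0 ≤ b - a then b - 0 else a) = f b
    rw [if_pos (by omega)]
    congr 1
  · show f (if n ≤ b - a then b - n else a) = f a
    by_cases h : n ≤ b - a
    · rw [if_pos h]
      congr 1
      omega
    · rw [if_neg h]
  · intro i hi
    show AdjE G (f (if i ≤ b - a then b - i else a)) (f (if i + 1 ≤ b - a then b - (i + 1) else a))
    by_cases h : i + 1 ≤ b - a
    · rw [if_pos (by omega), if_pos h]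
      have : b - i = (b - (i + 1)) + 1 := by omega
      rw [this]
      exact (hs (b - (i + 1)) (by omega) (by omega)).symm'
    · by_cases h2 : i ≤ b - a
      · rw [if_pos h2, if_neg h]
        have : b - i = a := by omega
        rw [this]
        exact AdjE.refl' _
      · rw [if_neg h2, if_neg h]
        exact AdjE.refl' _

lemma self_mem_closedKNbhd (n : ℕ) (x : V) : x ∈ closedKNbhd G n x := by
  have := mem_of_walk_le (G := G) (f := fun _ => x) (a := 0) (b := 0) (n := n)
    (by omega) (by omega) (by omega)
  simpa using this

variable {k : ℕ}

lemma pair_mem {x y u : V} (hx : x ∈ closedKNbhd G k u) (hy : y ∈ closedKNbhd G k u) :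
    ({x, y} : Set V) ∈ closedKNbhdComplex G k := by
  refine ⟨(Set.finite_singleton y).insert x, u, ?_⟩
  intro z hz
  rcases hz with rfl | hz
  · exact hx
  · rw [Set.mem_singleton_iff] at hz
    rw [hz]
    exact hy

lemma triple_mem {x y z u : V} (hx : x ∈ closedKNbhd G k u) (hy : y ∈ closedKNbhd G k u)
    (hz : z ∈ closedKNbhd G k u) :
    ({x, y, z} : Set V) ∈ closedKNbhdComplex G k := by
  refine ⟨((Set.finite_singleton z).insert y).insert x, u, ?_⟩
  intro a ha
  rcases ha with rfl | ha
  · exact hx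
  · rcases ha with rfl | ha
    · exact hy
    · rw [Set.mem_singleton_iff] at ha
      rw [ha]
      exact hz

lemma adjE_pair_mem (hk : 1 ≤ k) {x y : V} (h : AdjE G x y) :
    ({x, y} : Set V) ∈ closedKNbhdComplex G k := by
  refine pair_mem (self_mem_closedKNbhd k x) ?_
  have := mem_of_walk_le (G := G) (f := fun i => if i = 0 then x else y) (a := 0) (b := 1)
    (n := k) (by omega) (by omega) ?_
  · simpa using this
  · intro i h1 h2
    have : i = 0 := by omega
    subst this
    simpa using h

/-- Specification for a segment of length `2k` from `a` to `b`. -/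
def SegOk (G : SimpleGraph V) (k : ℕ) (a b : V) (f : ℕ → V) : Prop :=
  f 0 = a ∧ f (2 * k) = b ∧ ∀ i < 2 * k, AdjE G (f i) (f (i + 1))

lemma segOk_exists {a b : V} (h : ({a, b} : Set V) ∈ closedKNbhdComplex G k) :
    ∃ f, SegOk G k a b f := by
  obtain ⟨-, u, hsub⟩ := h
  have ha : a ∈ closedKNbhd G k u := hsub (by simp)
  have hb : b ∈ closedKNbhd G k u := hsub (by simp)
  obtain ⟨fa, fa0, fak, fas⟩ := mem_closedKNbhd_iff.mp ha
  obtain ⟨fb, fb0, fbk, fbs⟩ := mem_closedKNbhd_iff.mp hb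
  refine ⟨fun i => if i ≤ k then fa (k - i) else fb (i - k), ?_, ?_, ?_⟩
  · simp [fak]
  · have h1 : ¬ (2 * k ≤ k) ∨ k = 0 := by omega
    rcases h1 with h1 | h1
    · simp only [if_neg (by omega : ¬ (2 * k ≤ k))]
      have : 2 * k - k = k := by omega
      rw [this, fbk]
    · subst h1
      simp only [if_pos (by omega : 2 * 0 ≤ 0)]
      have : fa 0 = fb 0 := by rw [fa0, fb0]
      rw [(by omega : 0 - 2*0 = 0), this]
      simpa using fbk
  · intro i hi
    by_cases h1 : i + 1 ≤ k
    · simp only [if_pos (by omega : i ≤ k), if_pos h1]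
      have : k - i = (k - (i + 1)) + 1 := by omega
      rw [this]
      exact (fas (k - (i + 1)) (by omega)).symm'
    · by_cases h2 : i ≤ k
      · have hik : i = k := by omega
        subst hik
        simp only [if_pos (le_refl i), if_neg h1]
        have e1 : i - i = 0 := by omega
        have e2 : i + 1 - i = 1 := by omega
        rw [e1, e2]
        have : fa 0 = fb 0 := by rw [fa0, fb0]
        rw [this]
        exact fbs 0 (by omega)
      · simp only [if_neg h2, if_neg h1]
        have : i + 1 - k = (i - k) + 1 := by omega
        rw [this]
        exact fbs (i - k) (by omega)

open Classical in
/-- The chosen segment of length `2k` realizing an edge of the complex. -/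
noncomputable def seg (G : SimpleGraph V) (k : ℕ) (a b : V) : ℕ → V :=
  if h : ∃ f, SegOk G k a b f then h.choose else fun _ => a

lemma seg_ok {a b : V} (h : ({a, b} : Set V) ∈ closedKNbhdComplex G k) :
    SegOk G k a b (seg G k a b) := by
  rw [seg, dif_pos (segOk_exists h)]
  exact (segOk_exists h).choose_spec

end Aux
section Aux2

variable {V : Type*} {G : SimpleGraph V} {v w : V} {k : ℕ}

lemma gpath_ext {γ δ : GPath G v w} (h1 : γ.len = δ.len) (h2 : ∀ i, γ.toFun i = δ.toFun i) :
    γ = δ := by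
  obtain ⟨l1, f1, p1, p2, p3, p4⟩ := γ
  obtain ⟨l2, f2, q1, q2, q3, q4⟩ := δ
  simp only at h1 h2
  subst h1
  have : f1 = f2 := funext h2
  subst this
  rfl

lemma epath_ext {K : Set (Set V)} {γ δ : EPath K v w} (h1 : γ.len = δ.len)
    (h2 : ∀ i, γ.toFun i = δ.toFun i) : γ = δ := by
  obtain ⟨l1, f1, p1, p2, p3, p4⟩ := γ
  obtain ⟨l2, f2, q1, q2, q3, q4⟩ := δ
  simp only at h1 h2
  subst h1
  have : f1 = f2 := funext h2
  subst this
  rfl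

/-- Builder for `GPath` from a source condition, a junk condition and steps. -/
def GPath.mk' (G : SimpleGraph V) (v w : V) (len : ℕ) (f : ℕ → V) (h0 : f 0 = v)
    (hj : ∀ i, len ≤ i → f i = w) (hs : ∀ i, i < len → AdjE G (f i) (f (i + 1))) :
    GPath G v w :=
  ⟨len, f, h0, hj len le_rfl, hs, hj⟩

def EPath.mk' (K : Set (Set V)) (v w : V) (len : ℕ) (f : ℕ → V) (h0 : f 0 = v)
    (hj : ∀ i, len ≤ i → f i = w) (hs : ∀ i, i < len → ({f i, f (i + 1)} : Set V) ∈ K) :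
    EPath K v w :=
  ⟨len, f, h0, hj len le_rfl, hs, hj⟩

lemma GPath.stepAll (γ : GPath G v w) (i : ℕ) : AdjE G (γ.toFun i) (γ.toFun (i + 1)) := by
  by_cases h : i < γ.len
  · exact γ.step i h
  · exact Or.inr (by rw [γ.junk i (by omega), γ.junk (i + 1) (by omega)])

lemma ceq_refl (m : ℕ) (γ : GPath G v w) : CEq m γ γ := Relation.EqvGen.refl γ

lemma ceq_symm {m : ℕ} {γ δ : GPath G v w} (h : CEq m γ δ) : CEq m δ γ :=
  Relation.EqvGen.symm _ _ h

lemma ceq_trans {m : ℕ} {γ δ ε : GPath G v w} (h1 : CEq m γ δ) (h2 : CEq m δ ε) : CEq m γ ε :=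
  Relation.EqvGen.trans _ _ _ h1 h2

lemma ceq_of_relA {m : ℕ} {γ δ : GPath G v w} (h : RelA γ δ) : CEq m γ δ :=
  Relation.EqvGen.rel _ _ (Or.inl h)

lemma ceq_of_relB {m : ℕ} {γ δ : GPath G v w} (h : RelB m γ δ) : CEq m γ δ :=
  Relation.EqvGen.rel _ _ (Or.inr h)

lemma ceq_of_eq {m : ℕ} {γ δ : GPath G v w} (h : γ = δ) : CEq m γ δ := h ▸ ceq_refl m γ

lemma ehom_refl {K : Set (Set V)} (γ : EPath K v w) : EHom K γ γ := Relation.EqvGen.refl γ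

lemma ehom_symm {K : Set (Set V)} {γ δ : EPath K v w} (h : EHom K γ δ) : EHom K δ γ :=
  Relation.EqvGen.symm _ _ h

lemma ehom_trans {K : Set (Set V)} {γ δ ε : EPath K v w} (h1 : EHom K γ δ)
    (h2 : EHom K δ ε) : EHom K γ ε := Relation.EqvGen.trans _ _ _ h1 h2

lemma ehom_of_eq {K : Set (Set V)} {γ δ : EPath K v w} (h : γ = δ) : EHom K γ δ :=
  h ▸ ehom_refl γ

/-- Insertion of `n` copies of the vertex at position `p` into a graph path. -/
def insG (γ : GPath G v w) (p n : ℕ) (hp : p ≤ γ.len) : GPath G v w :=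
  GPath.mk' G v w (γ.len + n)
    (fun i => if i ≤ p then γ.toFun i else if i ≤ p + n then γ.toFun p else γ.toFun (i - n))
    (by beta_reduce; rw [if_pos (Nat.zero_le p)]; exact γ.source)
    (by
      intro i hi
      beta_reduce
      by_cases h1 : i ≤ p
      · rw [if_pos h1]
        exact γ.junk i (by omega)
      · rw [if_neg h1]
        by_cases h2 : i ≤ p + n
        · rw [if_pos h2]
          exact γ.junk p (by omega)
        · rw [if_neg h2]
          exact γ.junk (i - n) (by omega))
    (by
      intro i hi
      beta_reduce
      by_cases h1 : i + 1 ≤ p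
      · rw [if_pos (by omega), if_pos h1]
        exact γ.stepAll i
      · by_cases h2 : i + 1 ≤ p + n
        · rw [if_neg h1, if_pos h2]
          by_cases h3 : i ≤ p
          · have : i = p := by omega
            rw [if_pos h3, this]
            exact AdjE.refl' _
          · rw [if_neg h3, if_pos (by omega)]
            exact AdjE.refl' _
        · rw [if_neg h1, if_neg h2]
          by_cases h3 : i ≤ p
          · have hip : i = p := by omega
            rw [if_pos h3, hip]
            have : p + 1 - n = p + 1 := by omega
            rw [this]
            exact γ.stepAll p
          · by_cases h4 : i ≤ p + n
            · have : i = p + n := by omega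
              rw [if_neg h3, if_pos h4]
              have e : i + 1 - n = (i - n) + 1 := by omega
              have e2 : i - n = p := by omega
              rw [e, e2]
              exact γ.stepAll p
            · rw [if_neg h3, if_neg h4]
              have e : i + 1 - n = (i - n) + 1 := by omega
              rw [e]
              exact γ.stepAll (i - n))

lemma insG_toFun (γ : GPath G v w) (p n : ℕ) (hp : p ≤ γ.len) (i : ℕ) :
    (insG γ p n hp).toFun i =
      if i ≤ p then γ.toFun i else if i ≤ p + n then γ.toFun p else γ.toFun (i - n) := rfl

lemma insG_len (γ : GPath G v w) (p n : ℕ) (hp : p ≤ γ.len) :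
    (insG γ p n hp).len = γ.len + n := rfl

lemma ceq_insG (m : ℕ) (γ : GPath G v w) (p n : ℕ) (hp : p ≤ γ.len) :
    CEq m γ (insG γ p n hp) := by
  induction n with
  | zero =>
    refine ceq_of_eq (gpath_ext (by rw [insG_len]; omega) ?_)
    intro i
    rw [insG_toFun]
    by_cases h1 : i ≤ p
    · rw [if_pos h1]
    · rw [if_neg h1, if_neg (by omega : ¬ i ≤ p + 0)]
      congr 1
  | succ n ih =>
    refine ceq_trans ih (ceq_of_relA ?_)
    refine ⟨by rw [insG_len, insG_len]; omega, p + n, ?_, ?_, ?_⟩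
    · rw [insG_len]
      omega
    · intro i hi
      rw [insG_toFun, insG_toFun]
      by_cases h1 : i ≤ p
      · rw [if_pos h1, if_pos h1]
      · rw [if_neg h1, if_neg h1, if_pos (by omega), if_pos (by omega)]
    · intro i hi
      rw [insG_toFun, insG_toFun, if_neg (by omega : ¬ i + 1 ≤ p)]
      by_cases h1 : i ≤ p + n
      · have hi2 : i = p + n := by omega
        subst hi2
        rw [if_pos (by omega : p + n + 1 ≤ p + (n + 1))]
        by_cases h2 : p + n ≤ p
        · rw [if_pos h2]
          congr 1
          omega
        · rw [if_neg h2, if_pos le_rfl]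
      · rw [if_neg (by omega), if_neg h1, if_neg (by omega)]
        congr 1
        omega

lemma ceq_relB_direct {m : ℕ} (γ δ : GPath G v w) (i₀ : ℕ) (h1 : γ.len = δ.len)
    (h2 : i₀ ≤ γ.len) (h3 : ∀ i ≤ i₀, γ.toFun i = δ.toFun i)
    (h4 : ∀ i, i₀ + m ≤ i → γ.toFun i = δ.toFun i) : CEq m γ δ :=
  ceq_of_relB ⟨h1, i₀, h2, h3, h4⟩

end Aux2
section Aux3

variable {V : Type*} {G : SimpleGraph V} {v w : V} {k : ℕ}

lemma block_lt {k a b r : ℕ} (h : a < b) (hr : r < 2 * k) :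
    2 * k * a + r < 2 * k * b := by
  have le : 2 * k * (a + 1) ≤ 2 * k * b := Nat.mul_le_mul_left _ h
  have e : 2 * k * (a + 1) = 2 * k * a + 2 * k := Nat.mul_succ _ _
  omega

lemma div_add_mod_block {i r : ℕ} (hk : 1 ≤ k) (hr : r < 2 * k) :
    (2 * k * i + r) / (2 * k) = i ∧ (2 * k * i + r) % (2 * k) = r := by
  constructor
  · rw [Nat.mul_add_div (by omega), Nat.div_eq_of_lt hr]
    omega
  · rw [Nat.mul_add_mod, Nat.mod_eq_of_lt hr]

/-- The graph path associated to an edge path: each edge blown up into a chosen segment. -/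
noncomputable def FF (hk : 1 ≤ k) (ε : EPath (closedKNbhdComplex G k) v w) : GPath G v w :=
  GPath.mk' G v w (2 * k * ε.len)
    (fun j => if j < 2 * k * ε.len then
        seg G k (ε.toFun (j / (2 * k))) (ε.toFun (j / (2 * k) + 1)) (j % (2 * k)) else w)
    (by
      beta_reduce
      by_cases h : 0 < 2 * k * ε.len
      · rw [if_pos h, Nat.zero_div, Nat.zero_mod]
        have hlen : 0 < ε.len := by
          rcases Nat.eq_zero_or_pos ε.len with h0 | h0
          · rw [h0, Nat.mul_zero] at h
            omega
          · exact h0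
        have := (seg_ok (ε.edge 0 hlen)).1
        rw [this, ε.source]
      · rw [if_neg h]
        have hlen : ε.len = 0 := by
          rcases Nat.eq_zero_or_pos ε.len with h0 | h0
          · exact h0
          · exact absurd (block_lt (k := k) h0 (by omega : 0 < 2 * k)) (by omega)
        rw [← ε.target, hlen, ε.source])
    (by
      intro i hi
      beta_reduce
      rw [if_neg (by omega)])
    (by
      intro j hj
      beta_reduce
      rw [if_pos hj]
      set q := j / (2 * k) with hq
      set r := j % (2 * k) with hr
      have hj2 : j = 2 * k * q + r := by
        rw [hq, hr]
        exact (Nat.div_add_mod j (2 * k)).symm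
      have hr2 : r < 2 * k := by
        rw [hr]
        exact Nat.mod_lt _ (by omega)
      have hqlen : q < ε.len := by
        rw [hq]
        exact Nat.div_lt_of_lt_mul hj
      have sok := seg_ok (ε.edge q hqlen)
      by_cases h1 : r + 1 < 2 * k
      · have e0 : j + 1 = 2 * k * q + (r + 1) := by omega
        have hj1 : j + 1 < 2 * k * ε.len := by
          rw [e0]
          exact block_lt hqlen h1
        rw [if_pos hj1, e0, (div_add_mod_block hk h1).1, (div_add_mod_block hk h1).2]
        exact sok.2.2 r hr2
      · have hre : r + 1 = 2 * k := by omega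
        have hj1 : j + 1 = 2 * k * (q + 1) := by
          have : 2 * k * (q + 1) = 2 * k * q + 2 * k := Nat.mul_succ _ _
          omega
        have step := sok.2.2 r hr2
        rw [hre] at step
        rw [sok.2.1] at step
        by_cases h2 : q + 1 < ε.len
        · have hlt : j + 1 < 2 * k * ε.len := by
            rw [hj1]
            have := block_lt (k := k) h2 (by omega : 0 < 2 * k)
            omega
          rw [if_pos hlt]
          have e1 : j + 1 = 2 * k * (q + 1) + 0 := by omega
          rw [e1, (div_add_mod_block hk (by omega : 0 < 2 * k)).1,
            (div_add_mod_block hk (by omega : 0 < 2 * k)).2]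
          have sok2 := seg_ok (ε.edge (q + 1) h2)
          rw [sok2.1]
          exact step
        · have hqe : q + 1 = ε.len := by omega
          have hne : ¬ j + 1 < 2 * k * ε.len := by
            rw [hj1, hqe]
            omega
          rw [if_neg hne]
          have hw : w = ε.toFun (q + 1) := by
            rw [hqe, ε.target]
          nth_rewrite 2 [← hw] at step
          exact step)

lemma FF_toFun (hk : 1 ≤ k) (ε : EPath (closedKNbhdComplex G k) v w) (j : ℕ) :
    (FF hk ε).toFun j = if j < 2 * k * ε.len then
        seg G k (ε.toFun (j / (2 * k))) (ε.toFun (j / (2 * k) + 1)) (j % (2 * k)) else w := rfl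

lemma FF_len (hk : 1 ≤ k) (ε : EPath (closedKNbhdComplex G k) v w) :
    (FF hk ε).len = 2 * k * ε.len := rfl

lemma FF_val (hk : 1 ≤ k) (ε : EPath (closedKNbhdComplex G k) v w) {i r : ℕ}
    (hi : i < ε.len) (hr : r < 2 * k) :
    (FF hk ε).toFun (2 * k * i + r) = seg G k (ε.toFun i) (ε.toFun (i + 1)) r := by
  rw [FF_toFun, if_pos (block_lt hi hr), (div_add_mod_block hk hr).1, (div_add_mod_block hk hr).2]

lemma FF_mul (hk : 1 ≤ k) (ε : EPath (closedKNbhdComplex G k) v w) {i : ℕ} (hi : i ≤ ε.len) :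
    (FF hk ε).toFun (2 * k * i) = ε.toFun i := by
  by_cases h : i < ε.len
  · have := FF_val hk ε h (by omega : 0 < 2 * k)
    rw [Nat.add_zero] at this
    rw [this, (seg_ok (ε.edge i h)).1]
  · have hie : i = ε.len := by omega
    subst hie
    rw [FF_toFun, if_neg (by omega), ε.target]

/-- The edge path associated to a graph path: identical data. -/
def BB (hk : 1 ≤ k) (x : GPath G v w) : EPath (closedKNbhdComplex G k) v w :=
  ⟨x.len, x.toFun, x.source, x.target,
    fun i _ => adjE_pair_mem hk (x.stepAll i), x.junk⟩

lemma BB_toFun (hk : 1 ≤ k) (x : GPath G v w) (i : ℕ) : (BB hk x).toFun i = x.toFun i := rfl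

lemma BB_len (hk : 1 ≤ k) (x : GPath G v w) : (BB hk x).len = x.len := rfl

end Aux3
section Aux4

variable {V : Type*} {G : SimpleGraph V} {v w : V} {k : ℕ}

lemma pred_mul (m t : ℕ) : (m - 1) * t + t = m * t ∨ m = 0 := by
  rcases Nat.eq_zero_or_pos m with h | h
  · right; exact h
  · left
    calc (m - 1) * t + t = (m - 1 + 1) * t := by rw [Nat.add_mul, Nat.one_mul]
    _ = m * t := by congr 1; omega

lemma pred_mul2 (hk : 1 ≤ k) (t : ℕ) : (2 * k - 1) * t + t = 2 * k * t := by
  rcases pred_mul (2 * k) t with h | h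
  · exact h
  · omega

lemma mul_sub_succ (hk : 1 ≤ k) {L t : ℕ} (h : t < L) :
    2 * k * (L - t) = 2 * k * (L - (t + 1)) + 2 * k := by
  have e1 : L - t = (L - (t + 1)) + 1 := by omega
  rw [e1, Nat.mul_succ]

lemma mul_le_mul_of_le {a b : ℕ} (h : a ≤ b) : 2 * k * a ≤ 2 * k * b :=
  Nat.mul_le_mul_left _ h

lemma arithP (hk : 1 ≤ k) (L t : ℕ) (ht : t ≤ L) :
    2 * k * L = 2 * k * (L - t) + (2 * k - 1) * t + t := by
  have e1 : 2 * k * L = 2 * k * ((L - t) + t) := by congr 1; omega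
  rw [Nat.mul_add] at e1
  have e2 := pred_mul2 hk t
  omega

/-- Condition that a window of an edge path consists of graph steps. -/
def windowOK (G : SimpleGraph V) {K : Set (Set V)} (ε : EPath K v w) (i₀ s : ℕ) : Prop :=
  ∀ i, i₀ ≤ i → i < i₀ + s → AdjE G (ε.toFun i) (ε.toFun (i + 1))

/-- The edge path obtained by deleting `t` vertices following position `i₀`. -/
def delT (hk : 1 ≤ k) (ε : EPath (closedKNbhdComplex G k) v w) (i₀ s t : ℕ)
    (h1 : 1 ≤ s) (h2 : s ≤ 2 * k) (h3 : i₀ + s ≤ ε.len) (ht : t ≤ s - 1)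
    (hw : windowOK G ε i₀ s) : EPath (closedKNbhdComplex G k) v w :=
  EPath.mk' _ v w (ε.len - t) (fun i => if i ≤ i₀ then ε.toFun i else ε.toFun (i + t))
    (by beta_reduce; rw [if_pos (Nat.zero_le i₀)]; exact ε.source)
    (by
      intro i hi
      beta_reduce
      by_cases hit : i ≤ i₀
      · exfalso; omega
      · rw [if_neg hit]
        exact ε.junk (i + t) (by omega))
    (by
      intro i hi
      beta_reduce
      by_cases hc1 : i + 1 ≤ i₀
      · rw [if_pos (by omega), if_pos hc1]
        exact ε.edge i (by omega)
      · by_cases hc2 : i ≤ i₀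
        · have hii : i = i₀ := by omega
          subst hii
          rw [if_pos hc2, if_neg hc1]
          set m := (1 + t) - min (1 + t) k with hm
          have mem1 : ε.toFun i ∈ closedKNbhd G k (ε.toFun (i + m)) :=
            mem_of_walk_ge (f := ε.toFun) (a := i) (b := i + m) (n := k)
              (by omega) (by omega) (fun x hx1 hx2 => hw x hx1 (by omega))
          have mem2 : ε.toFun (i + 1 + t) ∈ closedKNbhd G k (ε.toFun (i + m)) := by
            have := mem_of_walk_le (f := ε.toFun) (a := i + m) (b := i + 1 + t) (n := k)
              (by omega) (by omega) (fun x hx1 hx2 => hw x (by omega) (by omega))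
            exact this
          exact pair_mem mem1 mem2
        · rw [if_neg hc2, if_neg (by omega)]
          have e : i + 1 + t = (i + t) + 1 := by omega
          rw [e]
          exact ε.edge (i + t) (by omega))

lemma delT_toFun (hk : 1 ≤ k) (ε : EPath (closedKNbhdComplex G k) v w) (i₀ s t : ℕ)
    (h1 : 1 ≤ s) (h2 : s ≤ 2 * k) (h3 : i₀ + s ≤ ε.len) (ht : t ≤ s - 1)
    (hw : windowOK G ε i₀ s) (i : ℕ) :
    (delT hk ε i₀ s t h1 h2 h3 ht hw).toFun i =
      if i ≤ i₀ then ε.toFun i else ε.toFun (i + t) := rfl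

lemma delT_len (hk : 1 ≤ k) (ε : EPath (closedKNbhdComplex G k) v w) (i₀ s t : ℕ)
    (h1 : 1 ≤ s) (h2 : s ≤ 2 * k) (h3 : i₀ + s ≤ ε.len) (ht : t ≤ s - 1)
    (hw : windowOK G ε i₀ s) :
    (delT hk ε i₀ s t h1 h2 h3 ht hw).len = ε.len - t := rfl

lemma ehom_delT (hk : 1 ≤ k) (ε : EPath (closedKNbhdComplex G k) v w) (i₀ s : ℕ)
    (h1 : 1 ≤ s) (h2 : s ≤ 2 * k) (h3 : i₀ + s ≤ ε.len) (hw : windowOK G ε i₀ s) :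
    ∀ t, (ht : t ≤ s - 1) →
      EHom (closedKNbhdComplex G k) ε (delT hk ε i₀ s t h1 h2 h3 ht hw) := by
  intro t
  induction t with
  | zero =>
    intro ht
    refine ehom_of_eq (epath_ext (by rw [delT_len]; omega) ?_)
    intro i
    rw [delT_toFun]
    by_cases hc : i ≤ i₀
    · rw [if_pos hc]
    · rw [if_neg hc]
      congr 1
  | succ t ih =>
    intro ht
    refine ehom_trans (ih (by omega)) (Relation.EqvGen.rel _ _ ?_)
    right
    refine ⟨i₀ + 1, by omega, ?_, ?_, ?_⟩
    · rw [delT_len]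
      omega
    · -- triple membership
      rw [delT_toFun, delT_toFun, delT_toFun]
      have e1 : i₀ + 1 - 1 = i₀ := by omega
      rw [e1, if_pos le_rfl, if_neg (by omega), if_neg (by omega)]
      set m := (2 + t) - min (2 + t) k with hm
      have mem1 : ε.toFun i₀ ∈ closedKNbhd G k (ε.toFun (i₀ + m)) :=
        mem_of_walk_ge (f := ε.toFun) (a := i₀) (b := i₀ + m) (n := k)
          (by omega) (by omega) (fun x hx1 hx2 => hw x hx1 (by omega))
      have mem2 : ε.toFun (i₀ + 1 + t) ∈ closedKNbhd G k (ε.toFun (i₀ + m)) := by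
        have := mem_of_walk_le (f := ε.toFun) (a := i₀ + m) (b := i₀ + 1 + t) (n := k)
          (by omega) (by omega) (fun x hx1 hx2 => hw x (by omega) (by omega))
        exact this
      have mem3 : ε.toFun (i₀ + 1 + 1 + t) ∈ closedKNbhd G k (ε.toFun (i₀ + m)) := by
        have := mem_of_walk_le (f := ε.toFun) (a := i₀ + m) (b := i₀ + 1 + 1 + t) (n := k)
          (by omega) (by omega) (fun x hx1 hx2 => hw x (by omega) (by omega))
        exact this
      exact triple_mem mem1 mem2 mem3
    · -- EDel
      refine ⟨by rw [delT_len, delT_len]; omega, ?_, ?_⟩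
      · intro i hi
        rw [delT_toFun, delT_toFun, if_pos (by omega), if_pos (by omega)]
      · intro i hi
        rw [delT_toFun, delT_toFun, if_neg (by omega), if_neg (by omega)]
        congr 1
        omega

end Aux4
section Aux5

variable {V : Type*} {G : SimpleGraph V} {v w : V} {k : ℕ}

lemma bb_relA (hk : 1 ≤ k) {x x' : GPath G v w} (h : RelA x x') :
    EHom (closedKNbhdComplex G k) (BB hk x) (BB hk x') := by
  obtain ⟨hlen, xp, hxp, ha1, ha2⟩ := h
  refine ehom_symm (Relation.EqvGen.rel _ _ ?_)
  left
  refine ⟨xp + 1, by omega, by rw [BB_len]; omega, ?_, by rw [BB_len, BB_len]; omega, ?_, ?_⟩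
  · show x'.toFun (xp + 1 - 1) = x'.toFun (xp + 1)
    have e : xp + 1 - 1 = xp := by omega
    rw [e, ← ha1 xp le_rfl, ← ha2 xp le_rfl]
  · intro i hi
    show x.toFun i = x'.toFun i
    exact ha1 i (by omega)
  · intro i hi
    show x.toFun i = x'.toFun (i + 1)
    exact ha2 i (by omega)

lemma bb_relB (hk : 1 ≤ k) {x x' : GPath G v w} (h : RelB (2 * k) x x') :
    EHom (closedKNbhdComplex G k) (BB hk x) (BB hk x') := by
  obtain ⟨hlen, i₀, hi₀, hb1, hb2⟩ := h
  by_cases hcase : i₀ < x.len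
  · set s := min (2 * k) (x.len - i₀) with hs
    have h1 : 1 ≤ s := by omega
    have h2 : s ≤ 2 * k := by omega
    have h3 : i₀ + s ≤ (BB hk x).len := by rw [BB_len]; omega
    have h3' : i₀ + s ≤ (BB hk x').len := by rw [BB_len]; omega
    have hw : windowOK G (BB hk x) i₀ s := fun i _ _ => x.stepAll i
    have hw' : windowOK G (BB hk x') i₀ s := fun i _ _ => x'.stepAll i
    have ht : s - 1 ≤ s - 1 := le_rfl
    have d1 := ehom_delT hk (BB hk x) i₀ s h1 h2 h3 hw (s - 1) ht
    have d2 := ehom_delT hk (BB hk x') i₀ s h1 h2 h3' hw' (s - 1) ht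
    refine ehom_trans d1 (ehom_trans (ehom_of_eq ?_) (ehom_symm d2))
    refine epath_ext (by rw [delT_len, delT_len, BB_len, BB_len]; omega) ?_
    intro i
    rw [delT_toFun, delT_toFun, BB_toFun, BB_toFun, BB_toFun, BB_toFun]
    by_cases hc : i ≤ i₀
    · rw [if_pos hc, if_pos hc]
      exact hb1 i hc
    · rw [if_neg hc, if_neg hc]
      have : i₀ + 2 * k ≤ i + (s - 1) ∨ x.len ≤ i + (s - 1) := by omega
      rcases this with hcc | hcc
      · exact hb2 _ hcc
      · rw [x.junk _ hcc, x'.junk _ (by omega)]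
  · refine ehom_of_eq (epath_ext (by rw [BB_len, BB_len]; omega) ?_)
    intro i
    rw [BB_toFun, BB_toFun]
    by_cases hc : i ≤ i₀
    · exact hb1 i hc
    · rw [x.junk i (by omega), x'.junk i (by omega)]

lemma bb_ceq (hk : 1 ≤ k) {x x' : GPath G v w} (h : CEq (2 * k) x x') :
    EHom (closedKNbhdComplex G k) (BB hk x) (BB hk x') := by
  induction h with
  | rel a b hab =>
    rcases hab with h | h
    · exact bb_relA hk h
    · exact bb_relB hk h
  | refl a => exact ehom_refl _
  | symm a b _ ih => exact ehom_symm ih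
  | trans a b c _ _ ih1 ih2 => exact ehom_trans ih1 ih2

/-- The intermediate stage for collapsing `BB (FF ε)` back to `ε`. -/
noncomputable def cP (hk : 1 ≤ k) (ε : EPath (closedKNbhdComplex G k) v w) (t : ℕ) (ht : t ≤ ε.len) :
    EPath (closedKNbhdComplex G k) v w :=
  EPath.mk' _ v w (t + 2 * k * (ε.len - t))
    (fun i => if i ≤ t then ε.toFun i else (FF hk ε).toFun (i + (2 * k - 1) * t))
    (by beta_reduce; rw [if_pos (Nat.zero_le t)]; exact ε.source)
    (by
      intro i hi
      beta_reduce
      by_cases hit : i ≤ t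
      · rw [if_pos hit]
        have hA : 2 * k * (ε.len - t) = 0 := by omega
        have hL : ε.len - t = 0 := by
          rcases Nat.mul_eq_zero.mp hA with h | h
          · omega
          · exact h
        exact ε.junk i (by omega)
      · rw [if_neg hit]
        refine (FF hk ε).junk _ ?_
        rw [FF_len]
        have e1 := arithP hk ε.len t ht
        omega)
    (by
      intro i hi
      beta_reduce
      have e2 := pred_mul2 hk t
      by_cases hc1 : i + 1 ≤ t
      · rw [if_pos (by omega), if_pos hc1]
        exact ε.edge i (by omega)
      · by_cases hc2 : i ≤ t
        · have hit : i = t := by omega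
          subst hit
          rw [if_pos hc2, if_neg hc1]
          have hiL : i < ε.len := by
            rcases Nat.eq_zero_or_pos (ε.len - i) with h0 | h0
            · exfalso
              have : 2 * k * (ε.len - i) = 0 := by rw [h0, Nat.mul_zero]
              omega
            · omega
          have pairm := adjE_pair_mem (G := G) hk ((FF hk ε).stepAll (2 * k * i))
          rw [FF_mul hk ε (le_of_lt hiL)] at pairm
          have e3 : i + 1 + (2 * k - 1) * i = 2 * k * i + 1 := by omega
          rw [e3]
          exact pairm
        · rw [if_neg hc2, if_neg (by omega)]
          have pairm := adjE_pair_mem (G := G) hk ((FF hk ε).stepAll (i + (2 * k - 1) * t))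
          have e3 : i + 1 + (2 * k - 1) * t = i + (2 * k - 1) * t + 1 := by omega
          rw [e3]
          exact pairm)

lemma cP_toFun (hk : 1 ≤ k) (ε : EPath (closedKNbhdComplex G k) v w) (t : ℕ) (ht : t ≤ ε.len)
    (i : ℕ) : (cP hk ε t ht).toFun i =
      if i ≤ t then ε.toFun i else (FF hk ε).toFun (i + (2 * k - 1) * t) := rfl

lemma cP_len (hk : 1 ≤ k) (ε : EPath (closedKNbhdComplex G k) v w) (t : ℕ) (ht : t ≤ ε.len) :
    (cP hk ε t ht).len = t + 2 * k * (ε.len - t) := rfl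

end Aux5
section Aux6

variable {V : Type*} {G : SimpleGraph V} {v w : V} {k : ℕ}

lemma cP_zero (hk : 1 ≤ k) (ε : EPath (closedKNbhdComplex G k) v w) :
    cP hk ε 0 (Nat.zero_le _) = BB hk (FF hk ε) := by
  refine epath_ext (by rw [cP_len, BB_len, FF_len, Nat.sub_zero]; omega) ?_
  intro i
  rw [cP_toFun, BB_toFun]
  by_cases hc : i ≤ 0
  · have : i = 0 := by omega
    subst this
    rw [if_pos le_rfl, ε.source, (FF hk ε).source]
  · rw [if_neg hc]
    rw [Nat.mul_zero, Nat.add_zero]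

lemma cP_last (hk : 1 ≤ k) (ε : EPath (closedKNbhdComplex G k) v w) :
    cP hk ε ε.len le_rfl = ε := by
  refine epath_ext (by rw [cP_len, Nat.sub_self, Nat.mul_zero]; omega) ?_
  intro i
  rw [cP_toFun]
  by_cases hc : i ≤ ε.len
  · rw [if_pos hc]
  · rw [if_neg hc]
    have e2 := pred_mul2 hk ε.len
    rw [(FF hk ε).junk _ (by rw [FF_len]; omega), ε.junk i (by omega)]

lemma cP_step (hk : 1 ≤ k) (ε : EPath (closedKNbhdComplex G k) v w) (t : ℕ)
    (ht : t < ε.len) :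
    EHom (closedKNbhdComplex G k) (cP hk ε t (le_of_lt ht)) (cP hk ε (t + 1) ht) := by
  have e2 := pred_mul2 hk t
  have e2' := pred_mul2 hk (t + 1)
  have emul := mul_sub_succ hk ht
  have emul2 : 2 * k * (t + 1) = 2 * k * t + 2 * k := Nat.mul_succ _ _
  have emul3 : (2 * k - 1) * (t + 1) = (2 * k - 1) * t + (2 * k - 1) := Nat.mul_succ _ _
  have h3 : t + 2 * k ≤ (cP hk ε t (le_of_lt ht)).len := by
    rw [cP_len]
    have : 2 * k * 1 ≤ 2 * k * (ε.len - t) := mul_le_mul_of_le (by omega)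
    omega
  have hw : windowOK G (cP hk ε t (le_of_lt ht)) t (2 * k) := by
    intro i hi1 hi2
    rw [cP_toFun, cP_toFun]
    by_cases hc : i ≤ t
    · have hit : i = t := by omega
      subst hit
      rw [if_pos le_rfl, if_neg (by omega)]
      have st := (FF hk ε).stepAll (2 * k * i)
      rw [FF_mul hk ε (le_of_lt ht)] at st
      have e3 : i + 1 + (2 * k - 1) * i = 2 * k * i + 1 := by omega
      rw [e3]
      exact st
    · rw [if_neg hc, if_neg (by omega)]
      have st := (FF hk ε).stepAll (i + (2 * k - 1) * t)
      have e3 : i + 1 + (2 * k - 1) * t = i + (2 * k - 1) * t + 1 := by omega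
      rw [e3]
      exact st
  have hd := ehom_delT hk (cP hk ε t (le_of_lt ht)) t (2 * k) (by omega) le_rfl h3 hw
    (2 * k - 1) le_rfl
  refine ehom_trans hd (ehom_of_eq (epath_ext ?_ ?_))
  · rw [delT_len, cP_len, cP_len]
    omega
  · intro i
    rw [delT_toFun, cP_toFun, cP_toFun, cP_toFun]
    by_cases hc1 : i ≤ t
    · rw [if_pos hc1, if_pos hc1, if_pos (by omega)]
    · rw [if_neg hc1]
      by_cases hc2 : i ≤ t + 1
      · have hit : i = t + 1 := by omega
        subst hit
        rw [if_neg (by omega), if_pos le_rfl]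
        have e3 : t + 1 + (2 * k - 1) + (2 * k - 1) * t = 2 * k * (t + 1) := by omega
        rw [e3, FF_mul hk ε (by omega)]
      · rw [if_neg (by omega), if_neg hc2]
        congr 1
        omega

lemma bb_ff (hk : 1 ≤ k) (ε : EPath (closedKNbhdComplex G k) v w) :
    EHom (closedKNbhdComplex G k) (BB hk (FF hk ε)) ε := by
  have main : ∀ t, (ht : t ≤ ε.len) →
      EHom (closedKNbhdComplex G k) (cP hk ε 0 (Nat.zero_le _)) (cP hk ε t ht) := by
    intro t
    induction t with
    | zero => intro ht; exact ehom_refl _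
    | succ t ih =>
      intro ht
      exact ehom_trans (ih (by omega)) (cP_step hk ε t ht)
  have := main ε.len le_rfl
  rw [cP_zero, cP_last] at this
  exact this

end Aux6
section Aux7

variable {V : Type*} {G : SimpleGraph V} {v w : V} {k : ℕ}

lemma adjE_div_succ (hk : 1 ≤ k) (x : GPath G v w) (i : ℕ) :
    AdjE G (x.toFun (i / (2 * k))) (x.toFun ((i + 1) / (2 * k))) := by
  set q := i / (2 * k) with hq
  set r := i % (2 * k) with hr
  have hi : i = 2 * k * q + r := by rw [hq, hr]; exact (Nat.div_add_mod _ _).symm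
  have hr2 : r < 2 * k := by rw [hr]; exact Nat.mod_lt _ (by omega)
  by_cases h : r + 1 < 2 * k
  · have e : i + 1 = 2 * k * q + (r + 1) := by omega
    rw [e, (div_add_mod_block hk h).1]
    exact AdjE.refl' _
  · have e : i + 1 = 2 * k * (q + 1) + 0 := by
      have h2 : 2 * k * (q + 1) = 2 * k * q + 2 * k := Nat.mul_succ _ _
      omega
    rw [e, (div_add_mod_block hk (by omega : 0 < 2 * k)).1]
    exact x.stepAll q

/-- Stretching the first `t` blocks of a graph path, plus `j` extra repeats. -/
def st (hk : 1 ≤ k) (x : GPath G v w) (t j : ℕ) (ht : t ≤ x.len) : GPath G v w :=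
  GPath.mk' G v w ((2 * k - 1) * t + j + x.len)
    (fun i => if i < 2 * k * t then x.toFun (i / (2 * k))
      else if i < 2 * k * t + j then x.toFun t
      else x.toFun (i - (2 * k - 1) * t - j))
    (by
      beta_reduce
      by_cases h1 : 0 < 2 * k * t
      · rw [if_pos h1, Nat.zero_div]
        exact x.source
      · rw [if_neg h1]
        by_cases h2 : 0 < 2 * k * t + j
        · rw [if_pos h2]
          have h3 : t = 0 := by
            rcases Nat.eq_zero_or_pos t with h | h
            · exact h
            · exact absurd (Nat.mul_pos (by omega : 0 < 2 * k) h) h1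
          rw [h3]
          exact x.source
        · rw [if_neg h2, Nat.zero_sub, Nat.zero_sub]
          exact x.source)
    (by
      intro i hi
      beta_reduce
      have e2 := pred_mul2 hk t
      rw [if_neg (by omega), if_neg (by omega)]
      exact x.junk _ (by omega))
    (by
      intro i hi
      beta_reduce
      have e2 := pred_mul2 hk t
      by_cases hA : i + 1 < 2 * k * t
      · rw [if_pos (by omega), if_pos hA]
        exact adjE_div_succ hk x i
      · by_cases hB : i < 2 * k * t
        · -- i + 1 = 2 k t, t ≥ 1
          have ht1 : 1 ≤ t := by
            rcases Nat.eq_zero_or_pos t with h | h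
            · rw [h, Nat.mul_zero] at hB; omega
            · exact h
          have hmul : 2 * k * (t - 1 + 1) = 2 * k * (t - 1) + 2 * k := Nat.mul_succ _ _
          have e3 : t - 1 + 1 = t := by omega
          rw [e3] at hmul
          have eB : i = 2 * k * (t - 1) + (2 * k - 1) := by omega
          have ediv : i / (2 * k) = t - 1 := by
            rw [eB, (div_add_mod_block hk (by omega : 2 * k - 1 < 2 * k)).1]
          rw [if_pos hB, ediv]
          have hstep := x.stepAll (t - 1)
          rw [e3] at hstep
          by_cases hj : j = 0
          · rw [if_neg (show ¬ i + 1 < 2 * k * t by omega),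
              if_neg (show ¬ i + 1 < 2 * k * t + j by omega)]
            have e4 : i + 1 - (2 * k - 1) * t - j = t := by omega
            rw [e4]
            exact hstep
          · rw [if_neg (show ¬ i + 1 < 2 * k * t by omega),
              if_pos (show i + 1 < 2 * k * t + j by omega)]
            exact hstep
        · -- i ≥ 2 k t
          rw [if_neg hB, if_neg (show ¬ i + 1 < 2 * k * t by omega)]
          by_cases hC : i < 2 * k * t + j
          · rw [if_pos hC]
            by_cases hD : i + 1 < 2 * k * t + j
            · rw [if_pos hD]
              exact AdjE.refl' _
            · rw [if_neg hD]
              have e4 : i + 1 - (2 * k - 1) * t - j = t := by omega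
              rw [e4]
              exact AdjE.refl' _
          · rw [if_neg hC, if_neg (show ¬ i + 1 < 2 * k * t + j by omega)]
            have e4 : i + 1 - (2 * k - 1) * t - j = (i - (2 * k - 1) * t - j) + 1 := by omega
            rw [e4]
            exact x.stepAll _)

lemma st_toFun (hk : 1 ≤ k) (x : GPath G v w) (t j : ℕ) (ht : t ≤ x.len) (i : ℕ) :
    (st hk x t j ht).toFun i =
      if i < 2 * k * t then x.toFun (i / (2 * k))
      else if i < 2 * k * t + j then x.toFun t
      else x.toFun (i - (2 * k - 1) * t - j) := rfl

lemma st_len (hk : 1 ≤ k) (x : GPath G v w) (t j : ℕ) (ht : t ≤ x.len) :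
    (st hk x t j ht).len = (2 * k - 1) * t + j + x.len := rfl

lemma st_zero (hk : 1 ≤ k) (x : GPath G v w) : st hk x 0 0 (Nat.zero_le _) = x := by
  refine gpath_ext (by rw [st_len]; omega) ?_
  intro i
  rw [st_toFun, if_neg (show ¬ i < 2 * k * 0 by omega), if_neg (show ¬ i < 2 * k * 0 + 0 by omega)]
  congr 1 <;> omega

lemma st_succ_j (hk : 1 ≤ k) (x : GPath G v w) (t j : ℕ) (ht : t ≤ x.len) :
    CEq (2 * k) (st hk x t j ht) (st hk x t (j + 1) ht) := by
  have e2 := pred_mul2 hk t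
  refine ceq_of_relA ⟨by rw [st_len, st_len]; omega, 2 * k * t + j, by rw [st_len]; omega,
    ?_, ?_⟩
  · intro i hi
    rw [st_toFun, st_toFun]
    by_cases h1 : i < 2 * k * t
    · rw [if_pos h1, if_pos h1]
    · rw [if_neg h1, if_neg h1]
      by_cases h2 : i < 2 * k * t + j
      · rw [if_pos h2, if_pos (by omega)]
      · have hie : i = 2 * k * t + j := by omega
        rw [if_neg h2, if_pos (by omega)]
        have e4 : i - (2 * k - 1) * t - j = t := by omega
        rw [e4]
  · intro i hi
    rw [st_toFun, st_toFun, if_neg (by omega : ¬ i + 1 < 2 * k * t)]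
    by_cases h1 : i < 2 * k * t + j
    · have hie : i = 2 * k * t + j := by omega
      rw [if_neg (by omega), if_pos h1, if_pos (by omega)]
    · rw [if_neg (by omega), if_neg h1, if_neg (by omega)]
      congr 1
      omega

lemma st_shift (hk : 1 ≤ k) (x : GPath G v w) (t : ℕ) (ht : t < x.len) :
    st hk x t (2 * k - 1) (le_of_lt ht) = st hk x (t + 1) 0 ht := by
  have e2 := pred_mul2 hk t
  have e2' := pred_mul2 hk (t + 1)
  have emul2 : 2 * k * (t + 1) = 2 * k * t + 2 * k := Nat.mul_succ _ _
  have emul3 : (2 * k - 1) * (t + 1) = (2 * k - 1) * t + (2 * k - 1) := Nat.mul_succ _ _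
  refine gpath_ext (by rw [st_len, st_len]; omega) ?_
  intro i
  rw [st_toFun, st_toFun]
  by_cases h1 : i < 2 * k * t
  · rw [if_pos h1, if_pos (by omega)]
  · rw [if_neg h1]
    by_cases h2 : i < 2 * k * t + (2 * k - 1)
    · rw [if_pos h2, if_pos (by omega)]
      have eB : i = 2 * k * t + (i - 2 * k * t) := by omega
      rw [eB, (div_add_mod_block hk (by omega : i - 2 * k * t < 2 * k)).1]
    · rw [if_neg h2]
      by_cases h3 : i < 2 * k * (t + 1)
      · have hie : i = 2 * k * t + (2 * k - 1) := by omega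
        rw [if_pos h3, hie, (div_add_mod_block hk (by omega : 2 * k - 1 < 2 * k)).1]
        have e4 : 2 * k * t + (2 * k - 1) - (2 * k - 1) * t - (2 * k - 1) = t := by omega
        rw [e4]
      · rw [if_neg h3, if_neg (by omega)]
        congr 1
        omega

lemma ceq_st_full (hk : 1 ≤ k) (x : GPath G v w) :
    CEq (2 * k) x (st hk x x.len 0 le_rfl) := by
  have main : ∀ t, (ht : t ≤ x.len) → CEq (2 * k) x (st hk x t 0 ht) := by
    intro t
    induction t with
    | zero => intro ht; exact ceq_of_eq (st_zero hk x).symm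
    | succ t ih =>
      intro ht
      have inner : ∀ j, CEq (2 * k) x (st hk x t j (by omega)) := by
        intro j
        induction j with
        | zero => exact ih (by omega)
        | succ j ihj => exact ceq_trans ihj (st_succ_j hk x t j (by omega))
      have := inner (2 * k - 1)
      rw [st_shift hk x t (by omega)] at this
      exact this
  exact main x.len le_rfl

end Aux7
section Aux8

variable {V : Type*} {G : SimpleGraph V} {v w : V} {k : ℕ}

/-- Intermediate stage replacing stretched blocks by chosen segments. -/
noncomputable def bt (hk : 1 ≤ k) (x : GPath G v w) (t : ℕ) (ht : t ≤ x.len) : GPath G v w :=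
  GPath.mk' G v w (2 * k * x.len)
    (fun i => if i < 2 * k * t then (FF hk (BB hk x)).toFun i
      else if i < 2 * k * x.len then x.toFun (i / (2 * k)) else w)
    (by
      beta_reduce
      by_cases h1 : 0 < 2 * k * t
      · rw [if_pos h1]
        exact (FF hk (BB hk x)).source
      · rw [if_neg h1]
        by_cases h2 : 0 < 2 * k * x.len
        · rw [if_pos h2, Nat.zero_div]
          exact x.source
        · rw [if_neg h2]
          have hL : x.len = 0 := by
            rcases Nat.eq_zero_or_pos x.len with h | h
            · exact h
            · exact absurd (Nat.mul_pos (by omega : 0 < 2 * k) h) h2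
          rw [← x.target, hL, x.source])
    (by
      intro i hi
      beta_reduce
      have hle : 2 * k * t ≤ 2 * k * x.len := mul_le_mul_of_le ht
      rw [if_neg (by omega), if_neg (by omega)])
    (by
      intro i hi
      beta_reduce
      have hle : 2 * k * t ≤ 2 * k * x.len := mul_le_mul_of_le ht
      have hffval : ∀ m, m ≤ 2 * k * x.len →
          (FF hk (BB hk x)).toFun m = (FF hk (BB hk x)).toFun m := fun _ _ => rfl
      by_cases hA : i + 1 < 2 * k * t
      · rw [if_pos (by omega), if_pos hA]
        exact (FF hk (BB hk x)).stepAll i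
      · by_cases hB : i < 2 * k * t
        · -- i + 1 = 2 k t
          rw [if_pos hB, if_neg (show ¬ i + 1 < 2 * k * t by omega)]
          have hval : (if i + 1 < 2 * k * x.len then x.toFun ((i + 1) / (2 * k)) else w) =
              (FF hk (BB hk x)).toFun (i + 1) := by
            have hit : i + 1 = 2 * k * t := by omega
            by_cases hC : i + 1 < 2 * k * x.len
            · rw [if_pos hC, hit]
              have hdiv : 2 * k * t / (2 * k) = t := by
                have h := (div_add_mod_block (i := t) (r := 0) hk (by omega : 0 < 2 * k)).1
                have e0 : 2 * k * t + 0 = 2 * k * t := by omega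
                rw [e0] at h
                exact h
              rw [hdiv]
              have hFF := FF_mul hk (BB hk x) (i := t) (by rw [BB_len]; exact ht)
              rw [BB_toFun] at hFF
              exact hFF.symm
            · rw [if_neg hC, hit]
              have htL : t = x.len := by
                rcases Nat.lt_or_ge t x.len with h | h
                · exfalso
                  have := block_lt (k := k) (r := 0) h (by omega)
                  omega
                · omega
              have := FF_mul hk (BB hk x) (i := t) (by rw [BB_len]; exact ht)
              rw [BB_toFun, htL, x.target] at this
              rw [htL, this]
          rw [hval]
          exact (FF hk (BB hk x)).stepAll i
        · -- i ≥ 2 k t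
          rw [if_neg hB, if_neg (show ¬ i + 1 < 2 * k * t by omega), if_pos hi]
          by_cases hC : i + 1 < 2 * k * x.len
          · rw [if_pos hC]
            exact adjE_div_succ hk x i
          · rw [if_neg hC]
            have hit : i + 1 = 2 * k * x.len := by omega
            have hww : w = x.toFun ((i + 1) / (2 * k)) := by
              rw [hit]
              have e0 : 2 * k * x.len + 0 = 2 * k * x.len := by omega
              have hdiv : (2 * k * x.len) / (2 * k) = x.len := by
                have := (div_add_mod_block (i := x.len) (r := 0) hk (by omega : 0 < 2 * k)).1
                rw [e0] at this
                exact this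
              rw [hdiv, x.target]
            have step := adjE_div_succ hk x i
            rw [← hww] at step
            exact step)

lemma bt_toFun (hk : 1 ≤ k) (x : GPath G v w) (t : ℕ) (ht : t ≤ x.len) (i : ℕ) :
    (bt hk x t ht).toFun i = if i < 2 * k * t then (FF hk (BB hk x)).toFun i
      else if i < 2 * k * x.len then x.toFun (i / (2 * k)) else w := rfl

lemma bt_len (hk : 1 ≤ k) (x : GPath G v w) (t : ℕ) (ht : t ≤ x.len) :
    (bt hk x t ht).len = 2 * k * x.len := rfl

lemma bt_zero (hk : 1 ≤ k) (x : GPath G v w) :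
    bt hk x 0 (Nat.zero_le _) = st hk x x.len 0 le_rfl := by
  have e2 := pred_mul2 hk x.len
  refine gpath_ext (by rw [bt_len, st_len]; omega) ?_
  intro i
  rw [bt_toFun, st_toFun, if_neg (show ¬ i < 2 * k * 0 by omega)]
  by_cases h1 : i < 2 * k * x.len
  · rw [if_pos h1, if_pos h1]
  · rw [if_neg h1, if_neg h1, if_neg (by omega)]
    rw [x.junk _ (by omega)]

lemma bt_last (hk : 1 ≤ k) (x : GPath G v w) :
    bt hk x x.len le_rfl = FF hk (BB hk x) := by
  refine gpath_ext (by rw [bt_len, FF_len, BB_len]) ?_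
  intro i
  rw [bt_toFun]
  by_cases h1 : i < 2 * k * x.len
  · rw [if_pos h1]
  · rw [if_neg h1, if_neg h1]
    rw [(FF hk (BB hk x)).junk i (by rw [FF_len, BB_len]; omega)]

lemma bt_step (hk : 1 ≤ k) (x : GPath G v w) (t : ℕ) (ht : t < x.len) :
    CEq (2 * k) (bt hk x t (le_of_lt ht)) (bt hk x (t + 1) ht) := by
  have emul2 : 2 * k * (t + 1) = 2 * k * t + 2 * k := Nat.mul_succ _ _
  have hle : 2 * k * (t + 1) ≤ 2 * k * x.len := mul_le_mul_of_le (by omega)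
  refine ceq_relB_direct _ _ (2 * k * t) (by rw [bt_len, bt_len]) (by rw [bt_len]; omega)
    ?_ ?_
  · intro i hi
    rw [bt_toFun, bt_toFun]
    by_cases h1 : i < 2 * k * t
    · rw [if_pos h1, if_pos (by omega)]
    · have hit : i = 2 * k * t := by omega
      rw [if_neg h1, if_pos (show i < 2 * k * (t + 1) by omega),
        if_pos (show i < 2 * k * x.len by omega)]
      have hdiv : i / (2 * k) = t := by
        have := (div_add_mod_block (i := t) (r := 0) hk (by omega : 0 < 2 * k)).1
        have e0 : 2 * k * t + 0 = 2 * k * t := by omega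
        rw [e0] at this
        rw [hit, this]
      have := FF_mul hk (BB hk x) (i := t) (by rw [BB_len]; omega)
      rw [BB_toFun] at this
      rw [hdiv, hit, this]
  · intro i hi
    rw [bt_toFun, bt_toFun, if_neg (show ¬ i < 2 * k * t by omega),
      if_neg (show ¬ i < 2 * k * (t + 1) by omega)]

lemma ff_bb (hk : 1 ≤ k) (x : GPath G v w) : CEq (2 * k) x (FF hk (BB hk x)) := by
  have main : ∀ t, (ht : t ≤ x.len) → CEq (2 * k) x (bt hk x t ht) := by
    intro t
    induction t with
    | zero =>
      intro ht
      refine ceq_trans (ceq_st_full hk x) (ceq_of_eq (bt_zero hk x).symm)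
    | succ t ih =>
      intro ht
      exact ceq_trans (ih (by omega)) (bt_step hk x t ht)
  have := main x.len le_rfl
  rw [bt_last hk x] at this
  exact this

end Aux8
section Aux9

variable {V : Type*} {G : SimpleGraph V} {v w : V} {k : ℕ}

/-- A graph path obtained from `FF ε` by replacing the window `[base, base+4k)`. -/
noncomputable def midP (hk : 1 ≤ k) (ε : EPath (closedKNbhdComplex G k) v w) (base : ℕ)
    (hbase : base + 4 * k ≤ 2 * k * ε.len) (h : ℕ → V)
    (h0 : h 0 = (FF hk ε).toFun base)
    (hstep : ∀ i, i < 4 * k - 1 → AdjE G (h i) (h (i + 1)))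
    (hlast : AdjE G (h (4 * k - 1)) ((FF hk ε).toFun (base + 4 * k))) : GPath G v w :=
  GPath.mk' G v w (2 * k * ε.len)
    (fun i => if base ≤ i ∧ i < base + 4 * k then h (i - base) else (FF hk ε).toFun i)
    (by
      beta_reduce
      by_cases hb : base ≤ 0 ∧ 0 < base + 4 * k
      · rw [if_pos hb]
        have hb0 : base = 0 := by omega
        have e : (0 : ℕ) - base = 0 := by omega
        rw [e, h0, hb0]
        exact (FF hk ε).source
      · rw [if_neg hb]
        exact (FF hk ε).source)
    (by
      intro i hi
      beta_reduce
      rw [if_neg (by omega)]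
      exact (FF hk ε).junk i (by rw [FF_len]; omega))
    (by
      intro i hi
      beta_reduce
      by_cases c1 : base ≤ i ∧ i < base + 4 * k
      · rw [if_pos c1]
        by_cases c2 : i + 1 < base + 4 * k
        · rw [if_pos (by omega : base ≤ i + 1 ∧ i + 1 < base + 4 * k)]
          have e : i + 1 - base = (i - base) + 1 := by omega
          rw [e]
          exact hstep (i - base) (by omega)
        · rw [if_neg (by omega)]
          have e : i - base = 4 * k - 1 := by omega
          have e2 : i + 1 = base + 4 * k := by omega
          rw [e, e2]
          exact hlast
      · rw [if_neg c1]
        by_cases c2 : base ≤ i + 1 ∧ i + 1 < base + 4 * k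
        · rw [if_pos c2]
          have e : i + 1 = base := by omega
          have e2 : i + 1 - base = 0 := by omega
          rw [e2, h0, ← e]
          exact (FF hk ε).stepAll i
        · rw [if_neg c2]
          exact (FF hk ε).stepAll i)

lemma midP_toFun (hk : 1 ≤ k) (ε : EPath (closedKNbhdComplex G k) v w) (base : ℕ)
    (hbase : base + 4 * k ≤ 2 * k * ε.len) (h : ℕ → V) (h0 hstep hlast) (i : ℕ) :
    (midP hk ε base hbase h h0 hstep hlast).toFun i =
      if base ≤ i ∧ i < base + 4 * k then h (i - base) else (FF hk ε).toFun i := rfl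

lemma midP_len (hk : 1 ≤ k) (ε : EPath (closedKNbhdComplex G k) v w) (base : ℕ)
    (hbase : base + 4 * k ≤ 2 * k * ε.len) (h : ℕ → V) (h0 hstep hlast) :
    (midP hk ε base hbase h h0 hstep hlast).len = 2 * k * ε.len := rfl

lemma midP_swap (hk : 1 ≤ k) (ε : EPath (closedKNbhdComplex G k) v w) (base : ℕ)
    (hbase : base + 4 * k ≤ 2 * k * ε.len) (h h' : ℕ → V)
    (h0 hstep hlast) (h0' hstep' hlast') (off : ℕ) (hoff : off + 2 * k ≤ 4 * k)
    (hag1 : ∀ i ≤ off, h i = h' i)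
    (hag2 : ∀ i, off + 2 * k ≤ i → i < 4 * k → h i = h' i) :
    CEq (2 * k) (midP hk ε base hbase h h0 hstep hlast)
      (midP hk ε base hbase h' h0' hstep' hlast') := by
  refine ceq_relB_direct _ _ (base + off) (by rw [midP_len, midP_len])
    (by rw [midP_len]; omega) ?_ ?_
  · intro i hi
    rw [midP_toFun, midP_toFun]
    by_cases c1 : base ≤ i ∧ i < base + 4 * k
    · rw [if_pos c1, if_pos c1]
      exact hag1 (i - base) (by omega)
    · rw [if_neg c1, if_neg c1]
  · intro i hi
    rw [midP_toFun, midP_toFun]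
    by_cases c1 : base ≤ i ∧ i < base + 4 * k
    · rw [if_pos c1, if_pos c1]
      rw [hag2 (i - base) (by omega) (by omega)]
    · rw [if_neg c1, if_neg c1]

/-- Four concatenated pieces of length `k`. -/
def quadF (k : ℕ) (f1 f2 f3 f4 : ℕ → V) : ℕ → V := fun i =>
  if i < k then f1 i
  else if i < 2 * k then f2 (i - k)
  else if i < 3 * k then f3 (i - 2 * k)
  else f4 (i - 3 * k)

lemma quad_zero (hk : 1 ≤ k) (f1 f2 f3 f4 : ℕ → V) : quadF k f1 f2 f3 f4 0 = f1 0 := by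
  simp only [quadF]
  rw [if_pos (show 0 < k by omega)]

lemma quad_step (hk : 1 ≤ k) {f1 f2 f3 f4 : ℕ → V}
    (s1 : ∀ i < k, AdjE G (f1 i) (f1 (i + 1)))
    (s2 : ∀ i < k, AdjE G (f2 i) (f2 (i + 1)))
    (s3 : ∀ i < k, AdjE G (f3 i) (f3 (i + 1)))
    (s4 : ∀ i < k, AdjE G (f4 i) (f4 (i + 1)))
    (j12 : f1 k = f2 0) (j23 : f2 k = f3 0) (j34 : f3 k = f4 0) :
    ∀ i, i < 4 * k - 1 → AdjE G (quadF k f1 f2 f3 f4 i) (quadF k f1 f2 f3 f4 (i + 1)) := by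
  intro i hi
  simp only [quadF]
  by_cases c1 : i + 1 < k
  · rw [if_pos (show i < k by omega), if_pos c1]
    exact s1 i (by omega)
  · by_cases c1' : i < k
    · have e := s1 i (by omega)
      rw [(show i + 1 = k by omega)] at e
      rw [if_pos c1', if_neg (show ¬ i + 1 < k by omega),
        if_pos (show i + 1 < 2 * k by omega), (show i + 1 - k = 0 by omega), ← j12]
      exact e
    · by_cases c2 : i + 1 < 2 * k
      · rw [if_neg (show ¬ i < k by omega), if_pos (show i < 2 * k by omega),
          if_neg (show ¬ i + 1 < k by omega), if_pos c2,
          (show i + 1 - k = (i - k) + 1 by omega)]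
        exact s2 (i - k) (by omega)
      · by_cases c2' : i < 2 * k
        · have e := s2 (i - k) (by omega)
          rw [(show i - k + 1 = k by omega)] at e
          rw [if_neg (show ¬ i < k by omega), if_pos c2',
            if_neg (show ¬ i + 1 < k by omega), if_neg (show ¬ i + 1 < 2 * k by omega),
            if_pos (show i + 1 < 3 * k by omega), (show i + 1 - 2 * k = 0 by omega), ← j23]
          exact e
        · by_cases c3 : i + 1 < 3 * k
          · rw [if_neg (show ¬ i < k by omega), if_neg (show ¬ i < 2 * k by omega),
              if_pos (show i < 3 * k by omega), if_neg (show ¬ i + 1 < k by omega),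
              if_neg (show ¬ i + 1 < 2 * k by omega), if_pos c3,
              (show i + 1 - 2 * k = (i - 2 * k) + 1 by omega)]
            exact s3 (i - 2 * k) (by omega)
          · by_cases c3' : i < 3 * k
            · have e := s3 (i - 2 * k) (by omega)
              rw [(show i - 2 * k + 1 = k by omega)] at e
              rw [if_neg (show ¬ i < k by omega), if_neg (show ¬ i < 2 * k by omega),
                if_pos c3', if_neg (show ¬ i + 1 < k by omega),
                if_neg (show ¬ i + 1 < 2 * k by omega), if_neg (show ¬ i + 1 < 3 * k by omega),
                (show i + 1 - 3 * k = 0 by omega), ← j34]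
              exact e
            · rw [if_neg (show ¬ i < k by omega), if_neg (show ¬ i < 2 * k by omega),
                if_neg (show ¬ i < 3 * k by omega), if_neg (show ¬ i + 1 < k by omega),
                if_neg (show ¬ i + 1 < 2 * k by omega), if_neg (show ¬ i + 1 < 3 * k by omega),
                (show i + 1 - 3 * k = (i - 3 * k) + 1 by omega)]
              exact s4 (i - 3 * k) (by omega)

lemma quad_last (hk : 1 ≤ k) {f1 f2 f3 f4 : ℕ → V}
    (s4 : ∀ i < k, AdjE G (f4 i) (f4 (i + 1))) (x : V) (hx : f4 k = x) :
    AdjE G (quadF k f1 f2 f3 f4 (4 * k - 1)) x := by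
  have e := s4 (4 * k - 1 - 3 * k) (by omega)
  rw [(show 4 * k - 1 - 3 * k + 1 = k by omega), hx] at e
  simp only [quadF]
  rw [if_neg (show ¬ 4 * k - 1 < k by omega), if_neg (show ¬ 4 * k - 1 < 2 * k by omega),
    if_neg (show ¬ 4 * k - 1 < 3 * k by omega)]
  exact e

lemma quad_val (hk : 1 ≤ k) (f1 f2 f3 f4 : ℕ → V) (i : ℕ) :
    quadF k f1 f2 f3 f4 i =
      if i < k then f1 i
      else if i < 2 * k then f2 (i - k)
      else if i < 3 * k then f3 (i - 2 * k)
      else f4 (i - 3 * k) := rfl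

end Aux9
section Aux10

variable {V : Type*} {G : SimpleGraph V} {v w : V} {k : ℕ}

lemma ff_core (hk : 1 ≤ k) (ε : EPath (closedKNbhdComplex G k) v w) (base : ℕ)
    (hbase : base + 4 * k ≤ 2 * k * ε.len)
    (a b c u : V) (sab sbc sac A Bw Cw : ℕ → V)
    (hsab : sab 0 = a ∧ sab (2 * k) = b ∧ ∀ i < 2 * k, AdjE G (sab i) (sab (i + 1)))
    (hsbc : sbc 0 = b ∧ sbc (2 * k) = c ∧ ∀ i < 2 * k, AdjE G (sbc i) (sbc (i + 1)))
    (hsac : sac 0 = a ∧ sac (2 * k) = c ∧ ∀ i < 2 * k, AdjE G (sac i) (sac (i + 1)))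
    (hA : A 0 = u ∧ A k = a ∧ ∀ i < k, AdjE G (A i) (A (i + 1)))
    (hB : Bw 0 = u ∧ Bw k = b ∧ ∀ i < k, AdjE G (Bw i) (Bw (i + 1)))
    (hC : Cw 0 = u ∧ Cw k = c ∧ ∀ i < k, AdjE G (Cw i) (Cw (i + 1)))
    (hFFwin : ∀ r, r < 2 * k → (FF hk ε).toFun (base + r) = sab r)
    (hFFwin2 : ∀ r, r < 2 * k → (FF hk ε).toFun (base + 2 * k + r) = sbc r)
    (hFFc : (FF hk ε).toFun (base + 4 * k) = c)
    (hz6 : quadF k sac (fun i => sac (i + k)) (fun _ => c) (fun _ => c) 0 =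
      (FF hk ε).toFun base)
    (hs6 : ∀ i, i < 4 * k - 1 →
      AdjE G (quadF k sac (fun i => sac (i + k)) (fun _ => c) (fun _ => c) i)
        (quadF k sac (fun i => sac (i + k)) (fun _ => c) (fun _ => c) (i + 1)))
    (hl6 : AdjE G (quadF k sac (fun i => sac (i + k)) (fun _ => c) (fun _ => c) (4 * k - 1))
      ((FF hk ε).toFun (base + 4 * k))) :
    CEq (2 * k) (FF hk ε)
      (midP hk ε base hbase (quadF k sac (fun i => sac (i + k)) (fun _ => c) (fun _ => c))
        hz6 hs6 hl6) := by
  have hFFa : (FF hk ε).toFun base = a := by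
    have := hFFwin 0 (by omega)
    rw [Nat.add_zero] at this
    rw [this, hsab.1]
  -- step bundles for the pieces
  have sRevA : ∀ i < k, AdjE G (A (k - i)) (A (k - (i + 1))) := by
    intro i hi
    have h := (hA.2.2 (k - (i + 1)) (by omega)).symm'
    rw [(show k - (i + 1) + 1 = k - i by omega)] at h
    exact h
  have sRevB : ∀ i < k, AdjE G (Bw (k - i)) (Bw (k - (i + 1))) := by
    intro i hi
    have h := (hB.2.2 (k - (i + 1)) (by omega)).symm'
    rw [(show k - (i + 1) + 1 = k - i by omega)] at h
    exact h
  have sSabL : ∀ i < k, AdjE G (sab i) (sab (i + 1)) := fun i hi => hsab.2.2 i (by omega)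
  have sSabH : ∀ i < k, AdjE G (sab (i + k)) (sab (i + 1 + k)) := by
    intro i hi
    have h := hsab.2.2 (i + k) (by omega)
    rw [(show i + k + 1 = i + 1 + k by omega)] at h
    exact h
  have sSbcL : ∀ i < k, AdjE G (sbc i) (sbc (i + 1)) := fun i hi => hsbc.2.2 i (by omega)
  have sSbcH : ∀ i < k, AdjE G (sbc (i + k)) (sbc (i + 1 + k)) := by
    intro i hi
    have h := hsbc.2.2 (i + k) (by omega)
    rw [(show i + k + 1 = i + 1 + k by omega)] at h
    exact h
  have sB : ∀ i < k, AdjE G (Bw i) (Bw (i + 1)) := fun i hi => hB.2.2 i (by omega)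
  have sC : ∀ i < k, AdjE G (Cw i) (Cw (i + 1)) := fun i hi => hC.2.2 i (by omega)
  have sU : ∀ i < k, AdjE G (u : V) u := fun _ _ => AdjE.refl' u
  have sCc : ∀ i < k, AdjE G (c : V) c := fun _ _ => AdjE.refl' c
  -- h0
  have hz0 : quadF k sab (fun i => sab (i + k)) sbc (fun i => sbc (i + k)) 0 =
      (FF hk ε).toFun base := by
    rw [quad_zero hk, hsab.1, hFFa]
  have hs0 := quad_step (G := G) hk sSabL sSabH sSbcL sSbcH
    (show sab k = sab (0 + k) by rw [Nat.zero_add])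
    (show sab (k + k) = sbc 0 by rw [(show k + k = 2 * k by omega), hsab.2.1, hsbc.1])
    (show sbc k = sbc (0 + k) by rw [Nat.zero_add])
  have hl0 : AdjE G (quadF k sab (fun i => sab (i + k)) sbc (fun i => sbc (i + k)) (4 * k - 1))
      ((FF hk ε).toFun (base + 4 * k)) := by
    rw [hFFc]
    refine quad_last hk sSbcH c ?_
    rw [(show k + k = 2 * k by omega), hsbc.2.1]
  -- h1
  have hz1 : quadF k (fun i => A (k - i)) Bw sbc (fun i => sbc (i + k)) 0 =
      (FF hk ε).toFun base := by
    rw [quad_zero hk, Nat.sub_zero, hA.2.1, hFFa]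
  have hs1 := quad_step (G := G) hk sRevA sB sSbcL sSbcH
    (show A (k - k) = Bw 0 by rw [Nat.sub_self, hA.1, hB.1])
    (show Bw k = sbc 0 by rw [hB.2.1, hsbc.1])
    (show sbc k = sbc (0 + k) by rw [Nat.zero_add])
  have hl1 : AdjE G (quadF k (fun i => A (k - i)) Bw sbc (fun i => sbc (i + k)) (4 * k - 1))
      ((FF hk ε).toFun (base + 4 * k)) := by
    rw [hFFc]
    refine quad_last hk sSbcH c ?_
    rw [(show k + k = 2 * k by omega), hsbc.2.1]
  -- h2
  have hz2 : quadF k (fun i => A (k - i)) Bw (fun i => Bw (k - i)) Cw 0 =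
      (FF hk ε).toFun base := by
    rw [quad_zero hk, Nat.sub_zero, hA.2.1, hFFa]
  have hs2 := quad_step (G := G) hk sRevA sB sRevB sC
    (show A (k - k) = Bw 0 by rw [Nat.sub_self, hA.1, hB.1])
    (show Bw k = Bw (k - 0) by rw [Nat.sub_zero])
    (show Bw (k - k) = Cw 0 by rw [Nat.sub_self, hB.1, hC.1])
  have hl2 : AdjE G (quadF k (fun i => A (k - i)) Bw (fun i => Bw (k - i)) Cw (4 * k - 1))
      ((FF hk ε).toFun (base + 4 * k)) := by
    rw [hFFc]
    exact quad_last hk sC c hC.2.1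
  -- h3
  have hz3 : quadF k (fun i => A (k - i)) (fun _ => u) (fun _ => u) Cw 0 =
      (FF hk ε).toFun base := by
    rw [quad_zero hk, Nat.sub_zero, hA.2.1, hFFa]
  have hs3 := quad_step (G := G) hk sRevA sU sU sC
    (show A (k - k) = u by rw [Nat.sub_self, hA.1])
    (show (u : V) = u from rfl)
    (show (u : V) = Cw 0 by rw [hC.1])
  have hl3 : AdjE G (quadF k (fun i => A (k - i)) (fun _ => u) (fun _ => u) Cw (4 * k - 1))
      ((FF hk ε).toFun (base + 4 * k)) := by
    rw [hFFc]
    exact quad_last hk sC c hC.2.1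
  -- h4
  have hz4 : quadF k (fun i => A (k - i)) (fun _ => u) Cw (fun _ => c) 0 =
      (FF hk ε).toFun base := by
    rw [quad_zero hk, Nat.sub_zero, hA.2.1, hFFa]
  have hs4 := quad_step (G := G) hk sRevA sU sC sCc
    (show A (k - k) = u by rw [Nat.sub_self, hA.1])
    (show (u : V) = Cw 0 by rw [hC.1])
    (show Cw k = c from hC.2.1)
  have hl4 : AdjE G (quadF k (fun i => A (k - i)) (fun _ => u) Cw (fun _ => c) (4 * k - 1))
      ((FF hk ε).toFun (base + 4 * k)) := by
    rw [hFFc]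
    exact quad_last hk sCc c rfl
  -- h5
  have hz5 : quadF k (fun i => A (k - i)) Cw (fun _ => c) (fun _ => c) 0 =
      (FF hk ε).toFun base := by
    rw [quad_zero hk, Nat.sub_zero, hA.2.1, hFFa]
  have hs5 := quad_step (G := G) hk sRevA sC sCc sCc
    (show A (k - k) = Cw 0 by rw [Nat.sub_self, hA.1, hC.1])
    (show Cw k = c from hC.2.1)
    (show (c : V) = c from rfl)
  have hl5 : AdjE G (quadF k (fun i => A (k - i)) Cw (fun _ => c) (fun _ => c) (4 * k - 1))
      ((FF hk ε).toFun (base + 4 * k)) := by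
    rw [hFFc]
    exact quad_last hk sCc c rfl
  -- chain
  have eqStart : FF hk ε =
      midP hk ε base hbase (quadF k sab (fun i => sab (i + k)) sbc (fun i => sbc (i + k)))
        hz0 hs0 hl0 := by
    refine gpath_ext (by rw [midP_len, FF_len]) ?_
    intro i
    rw [midP_toFun]
    by_cases c1 : base ≤ i ∧ i < base + 4 * k
    · rw [if_pos c1]
      obtain ⟨r, rfl⟩ : ∃ r, i = base + r := ⟨i - base, by omega⟩
      rw [(show base + r - base = r by omega)]
      rw [quad_val hk]
      by_cases d1 : r < k
      · rw [if_pos d1, hFFwin r (by omega)]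
      · by_cases d2 : r < 2 * k
        · rw [if_neg d1, if_pos d2, hFFwin r (by omega), (show r - k + k = r by omega)]
        · by_cases d3 : r < 3 * k
          · rw [if_neg d1, if_neg d2, if_pos d3,
              (show base + r = base + 2 * k + (r - 2 * k) by omega),
              hFFwin2 (r - 2 * k) (by omega)]
          · rw [if_neg d1, if_neg d2, if_neg d3,
              (show base + r = base + 2 * k + (r - 2 * k) by omega),
              hFFwin2 (r - 2 * k) (by omega), (show r - 3 * k + k = r - 2 * k by omega)]
    · rw [if_neg c1]
  refine ceq_trans (ceq_of_eq eqStart) ?_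
  refine ceq_trans (midP_swap hk ε base hbase _ _ hz0 hs0 hl0 hz1 hs1 hl1 0 (by omega)
    ?_ ?_) ?_
  · -- agreement h0 h1 low (i ≤ 0)
    intro i hi
    have : i = 0 := by omega
    subst this
    rw [quad_zero hk, quad_zero hk, hsab.1, Nat.sub_zero, hA.2.1]
  · -- agreement h0 h1 high (i ≥ 2k)
    intro i hi1 hi2
    rw [quad_val hk, quad_val hk, if_neg (show ¬ i < k by omega),
      if_neg (show ¬ i < k by omega), if_neg (show ¬ i < 2 * k by omega),
      if_neg (show ¬ i < 2 * k by omega)]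
  refine ceq_trans (midP_swap hk ε base hbase _ _ hz1 hs1 hl1 hz2 hs2 hl2 (2 * k) (by omega)
    ?_ ?_) ?_
  · -- agreement h1 h2 low (i ≤ 2k)
    intro i hi
    rw [quad_val hk, quad_val hk]
    by_cases d1 : i < k
    · rw [if_pos d1, if_pos d1]
    · by_cases d2 : i < 2 * k
      · rw [if_neg d1, if_neg d1, if_pos d2, if_pos d2]
      · rw [if_neg d1, if_neg d1, if_neg d2, if_neg d2,
          if_pos (show i < 3 * k by omega), if_pos (show i < 3 * k by omega),
          (show i - 2 * k = 0 by omega), hsbc.1, Nat.sub_zero, hB.2.1]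
  · -- agreement h1 h2 high (i ≥ 4k): vacuous
    intro i hi1 hi2
    exact absurd hi2 (by omega)
  refine ceq_trans (midP_swap hk ε base hbase _ _ hz2 hs2 hl2 hz3 hs3 hl3 k (by omega)
    ?_ ?_) ?_
  · -- agreement h2 h3 low (i ≤ k)
    intro i hi
    rw [quad_val hk, quad_val hk]
    by_cases d1 : i < k
    · rw [if_pos d1, if_pos d1]
    · rw [if_neg d1, if_neg d1, if_pos (show i < 2 * k by omega),
        if_pos (show i < 2 * k by omega), (show i - k = 0 by omega), hB.1]
  · -- agreement h2 h3 high (i ≥ 3k)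
    intro i hi1 hi2
    rw [quad_val hk, quad_val hk, if_neg (show ¬ i < k by omega),
      if_neg (show ¬ i < k by omega), if_neg (show ¬ i < 2 * k by omega),
      if_neg (show ¬ i < 2 * k by omega), if_neg (show ¬ i < 3 * k by omega),
      if_neg (show ¬ i < 3 * k by omega)]
  refine ceq_trans (midP_swap hk ε base hbase _ _ hz3 hs3 hl3 hz4 hs4 hl4 (2 * k) (by omega)
    ?_ ?_) ?_
  · -- agreement h3 h4 low (i ≤ 2k)
    intro i hi
    rw [quad_val hk, quad_val hk]
    by_cases d1 : i < k
    · rw [if_pos d1, if_pos d1]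
    · by_cases d2 : i < 2 * k
      · rw [if_neg d1, if_neg d1, if_pos d2, if_pos d2]
      · rw [if_neg d1, if_neg d1, if_neg d2, if_neg d2,
          if_pos (show i < 3 * k by omega), if_pos (show i < 3 * k by omega),
          (show i - 2 * k = 0 by omega), hC.1]
  · -- agreement h3 h4 high: vacuous
    intro i hi1 hi2
    exact absurd hi2 (by omega)
  refine ceq_trans (midP_swap hk ε base hbase _ _ hz4 hs4 hl4 hz5 hs5 hl5 k (by omega)
    ?_ ?_) ?_
  · -- agreement h4 h5 low (i ≤ k)
    intro i hi
    rw [quad_val hk, quad_val hk]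
    by_cases d1 : i < k
    · rw [if_pos d1, if_pos d1]
    · rw [if_neg d1, if_neg d1, if_pos (show i < 2 * k by omega),
        if_pos (show i < 2 * k by omega), (show i - k = 0 by omega), hC.1]
  · -- agreement h4 h5 high (i ≥ 3k)
    intro i hi1 hi2
    rw [quad_val hk, quad_val hk, if_neg (show ¬ i < k by omega),
      if_neg (show ¬ i < k by omega), if_neg (show ¬ i < 2 * k by omega),
      if_neg (show ¬ i < 2 * k by omega), if_neg (show ¬ i < 3 * k by omega),
      if_neg (show ¬ i < 3 * k by omega)]
  refine midP_swap hk ε base hbase _ _ hz5 hs5 hl5 hz6 hs6 hl6 0 (by omega) ?_ ?_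
  · -- agreement h5 h6 low (i ≤ 0)
    intro i hi
    have : i = 0 := by omega
    subst this
    rw [quad_zero hk, quad_zero hk, Nat.sub_zero, hA.2.1, hsac.1]
  · -- agreement h5 h6 high (i ≥ 2k)
    intro i hi1 hi2
    rw [quad_val hk, quad_val hk, if_neg (show ¬ i < k by omega),
      if_neg (show ¬ i < k by omega), if_neg (show ¬ i < 2 * k by omega),
      if_neg (show ¬ i < 2 * k by omega)]

end Aux10
section Aux11

variable {V : Type*} {G : SimpleGraph V} {v w : V} {k : ℕ}

lemma ff_main (hk : 1 ≤ k) (ε ε' : EPath (closedKNbhdComplex G k) v w) (j : ℕ)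
    (hj1 : 1 ≤ j) (hj2 : j + 1 ≤ ε.len) (hdel : EDel ε ε' j) (u : V)
    (hua : ε.toFun (j - 1) ∈ closedKNbhd G k u)
    (hub : ε.toFun j ∈ closedKNbhd G k u)
    (huc : ε.toFun (j + 1) ∈ closedKNbhd G k u) :
    CEq (2 * k) (FF hk ε) (FF hk ε') := by
  obtain ⟨hlen, hd1, hd2⟩ := hdel
  obtain ⟨A, hA0, hAk, hAs⟩ := mem_closedKNbhd_iff.mp hua
  obtain ⟨Bw, hB0, hBk, hBs⟩ := mem_closedKNbhd_iff.mp hub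
  obtain ⟨Cw, hC0, hCk, hCs⟩ := mem_closedKNbhd_iff.mp huc
  have ejj : j - 1 + 1 = j := by omega
  have hab : ({ε.toFun (j - 1), ε.toFun j} : Set V) ∈ closedKNbhdComplex G k := by
    have h := ε.edge (j - 1) (by omega)
    rw [ejj] at h
    exact h
  have hbc : ({ε.toFun j, ε.toFun (j + 1)} : Set V) ∈ closedKNbhdComplex G k :=
    ε.edge j (by omega)
  have hac : ({ε.toFun (j - 1), ε.toFun (j + 1)} : Set V) ∈ closedKNbhdComplex G k :=
    pair_mem hua huc
  have sab := seg_ok hab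
  have sbc := seg_ok hbc
  have sac := seg_ok hac
  have e1 : 2 * k * j = 2 * k * (j - 1) + 2 * k := by
    have h : 2 * k * (j - 1 + 1) = 2 * k * (j - 1) + 2 * k := Nat.mul_succ _ _
    rw [ejj] at h
    omega
  have e2 : 2 * k * (j + 1) = 2 * k * j + 2 * k := Nat.mul_succ _ _
  have e3 : 2 * k * ε.len = 2 * k * ε'.len + 2 * k := by
    have h : 2 * k * (ε'.len + 1) = 2 * k * ε'.len + 2 * k := Nat.mul_succ _ _
    rw [← hlen] at h
    exact h
  have hble : 2 * k * (j + 1) ≤ 2 * k * ε.len := mul_le_mul_of_le hj2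
  have hbase : 2 * k * (j - 1) + 4 * k ≤ 2 * k * ε.len := by omega
  have hwin1 : ∀ r, r < 2 * k → (FF hk ε).toFun (2 * k * (j - 1) + r) =
      seg G k (ε.toFun (j - 1)) (ε.toFun j) r := by
    intro r hr
    have h := FF_val hk ε (i := j - 1) (by omega) hr
    rw [ejj] at h
    exact h
  have hwin2 : ∀ r, r < 2 * k → (FF hk ε).toFun (2 * k * (j - 1) + 2 * k + r) =
      seg G k (ε.toFun j) (ε.toFun (j + 1)) r := by
    intro r hr
    rw [(show 2 * k * (j - 1) + 2 * k + r = 2 * k * j + r by omega)]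
    exact FF_val hk ε (i := j) (by omega) hr
  have hwc : (FF hk ε).toFun (2 * k * (j - 1) + 4 * k) = ε.toFun (j + 1) := by
    rw [(show 2 * k * (j - 1) + 4 * k = 2 * k * (j + 1) by omega)]
    exact FF_mul hk ε (by omega)
  have hFFa : (FF hk ε).toFun (2 * k * (j - 1)) = ε.toFun (j - 1) :=
    FF_mul hk ε (by omega)
  -- hypotheses for the final window content
  have sacS : ∀ i < k, AdjE G ((seg G k (ε.toFun (j - 1)) (ε.toFun (j + 1))) i)
      ((seg G k (ε.toFun (j - 1)) (ε.toFun (j + 1))) (i + 1)) :=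
    fun i hi => sac.2.2 i (by omega)
  have sacH : ∀ i < k, AdjE G ((seg G k (ε.toFun (j - 1)) (ε.toFun (j + 1))) (i + k))
      ((seg G k (ε.toFun (j - 1)) (ε.toFun (j + 1))) (i + 1 + k)) := by
    intro i hi
    have h := sac.2.2 (i + k) (by omega)
    rw [(show i + k + 1 = i + 1 + k by omega)] at h
    exact h
  have sCc : ∀ i < k, AdjE G (ε.toFun (j + 1)) (ε.toFun (j + 1)) :=
    fun _ _ => AdjE.refl' _
  have hz6 : quadF k (seg G k (ε.toFun (j - 1)) (ε.toFun (j + 1)))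
      (fun i => (seg G k (ε.toFun (j - 1)) (ε.toFun (j + 1))) (i + k))
      (fun _ => ε.toFun (j + 1)) (fun _ => ε.toFun (j + 1)) 0 =
      (FF hk ε).toFun (2 * k * (j - 1)) := by
    rw [quad_zero hk, sac.1, hFFa]
  have hs6 := quad_step (G := G) hk sacS sacH sCc sCc
    (show (seg G k (ε.toFun (j - 1)) (ε.toFun (j + 1))) k =
      (seg G k (ε.toFun (j - 1)) (ε.toFun (j + 1))) (0 + k) by rw [Nat.zero_add])
    (show (seg G k (ε.toFun (j - 1)) (ε.toFun (j + 1))) (k + k) = ε.toFun (j + 1) by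
      rw [(show k + k = 2 * k by omega), sac.2.1])
    (show ε.toFun (j + 1) = ε.toFun (j + 1) from rfl)
  have hl6 : AdjE G (quadF k (seg G k (ε.toFun (j - 1)) (ε.toFun (j + 1)))
      (fun i => (seg G k (ε.toFun (j - 1)) (ε.toFun (j + 1))) (i + k))
      (fun _ => ε.toFun (j + 1)) (fun _ => ε.toFun (j + 1)) (4 * k - 1))
      ((FF hk ε).toFun (2 * k * (j - 1) + 4 * k)) := by
    rw [hwc]
    exact quad_last hk sCc _ rfl
  have core := ff_core hk ε (2 * k * (j - 1)) hbase (ε.toFun (j - 1)) (ε.toFun j)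
    (ε.toFun (j + 1)) u (seg G k (ε.toFun (j - 1)) (ε.toFun j))
    (seg G k (ε.toFun j) (ε.toFun (j + 1))) (seg G k (ε.toFun (j - 1)) (ε.toFun (j + 1)))
    A Bw Cw ⟨sab.1, sab.2.1, fun i hi => sab.2.2 i hi⟩
    ⟨sbc.1, sbc.2.1, fun i hi => sbc.2.2 i hi⟩
    ⟨sac.1, sac.2.1, fun i hi => sac.2.2 i hi⟩
    ⟨hA0, hAk, hAs⟩ ⟨hB0, hBk, hBs⟩ ⟨hC0, hCk, hCs⟩
    hwin1 hwin2 hwc hz6 hs6 hl6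
  have hp : 2 * k * j ≤ (FF hk ε').len := by
    rw [FF_len]
    exact mul_le_mul_of_le (by omega)
  have hmid : (FF hk ε').toFun (2 * k * j) = ε.toFun (j + 1) := by
    have h := FF_mul hk ε' (i := j) (by omega)
    rw [hd2 j le_rfl] at h
    exact h
  have eqEnd : midP hk ε (2 * k * (j - 1)) hbase
      (quadF k (seg G k (ε.toFun (j - 1)) (ε.toFun (j + 1)))
        (fun i => (seg G k (ε.toFun (j - 1)) (ε.toFun (j + 1))) (i + k))
        (fun _ => ε.toFun (j + 1)) (fun _ => ε.toFun (j + 1))) hz6 hs6 hl6 =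
      insG (FF hk ε') (2 * k * j) (2 * k) hp := by
    refine gpath_ext (by rw [midP_len, insG_len, FF_len]; omega) ?_
    intro i
    rw [midP_toFun, insG_toFun]
    by_cases c1 : 2 * k * (j - 1) ≤ i ∧ i < 2 * k * (j - 1) + 4 * k
    · rw [if_pos c1]
      obtain ⟨r, rfl⟩ : ∃ r, i = 2 * k * (j - 1) + r := ⟨i - 2 * k * (j - 1), by omega⟩
      rw [(show 2 * k * (j - 1) + r - 2 * k * (j - 1) = r by omega), quad_val hk]
      by_cases d2 : r < 2 * k
      · rw [if_pos (show 2 * k * (j - 1) + r ≤ 2 * k * j by omega)]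
        have hval : (FF hk ε').toFun (2 * k * (j - 1) + r) =
            seg G k (ε'.toFun (j - 1)) (ε'.toFun j) r := by
          have h := FF_val hk ε' (i := j - 1) (by omega) d2
          rw [ejj] at h
          exact h
        rw [hval, hd1 (j - 1) (by omega), hd2 j le_rfl]
        by_cases d1 : r < k
        · rw [if_pos d1]
        · rw [if_neg d1, if_pos d2, (show r - k + k = r by omega)]
      · rw [if_neg (show ¬ r < k by omega), if_neg d2]
        have hLc : (if r < 3 * k then (fun _ => ε.toFun (j + 1)) (r - 2 * k)
            else (fun _ => ε.toFun (j + 1)) (r - 3 * k)) = ε.toFun (j + 1) := by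
          by_cases d3 : r < 3 * k
          · rw [if_pos d3]
          · rw [if_neg d3]
        rw [hLc]
        by_cases dR : 2 * k * (j - 1) + r ≤ 2 * k * j
        · rw [if_pos dR, (show 2 * k * (j - 1) + r = 2 * k * j by omega), hmid]
        · rw [if_neg dR, if_pos (show 2 * k * (j - 1) + r ≤ 2 * k * j + 2 * k by omega), hmid]
    · rw [if_neg c1]
      by_cases cL : i < 2 * k * (j - 1)
      · rw [if_pos (show i ≤ 2 * k * j by omega)]
        set q := i / (2 * k) with hq
        set r := i % (2 * k) with hr
        have hqr : i = 2 * k * q + r := by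
          rw [hq, hr]
          exact (Nat.div_add_mod _ _).symm
        have hrlt : r < 2 * k := by
          rw [hr]
          exact Nat.mod_lt _ (by omega)
        have hql : q < j - 1 := by
          rw [hq]
          exact Nat.div_lt_of_lt_mul cL
        rw [hqr, FF_val hk ε (by omega) hrlt, FF_val hk ε' (by omega) hrlt,
          hd1 q (by omega), hd1 (q + 1) (by omega)]
      · -- right region : i ≥ 2 k (j-1) + 4 k
        have hge : 2 * k * j + 2 * k ≤ i := by omega
        by_cases cE : i = 2 * k * j + 2 * k
        · rw [if_neg (by omega), if_pos (by omega), hmid,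
            (show i = 2 * k * (j - 1) + 4 * k by omega), hwc]
        · rw [if_neg (by omega), if_neg (by omega)]
          by_cases dL : i < 2 * k * ε.len
          · set q := i / (2 * k) with hq
            set r := i % (2 * k) with hr
            have hqr : i = 2 * k * q + r := by
              rw [hq, hr]
              exact (Nat.div_add_mod _ _).symm
            have hrlt : r < 2 * k := by
              rw [hr]
              exact Nat.mod_lt _ (by omega)
            have hqlen : q < ε.len := by
              rw [hq]
              exact Nat.div_lt_of_lt_mul dL
            have hqge : j + 1 ≤ q := by
              by_contra hq'
              push_neg at hq'
              have h1 : 2 * k * (q + 1) ≤ 2 * k * (j + 1) := mul_le_mul_of_le (by omega)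
              have h2 : 2 * k * (q + 1) = 2 * k * q + 2 * k := Nat.mul_succ _ _
              omega
            have h2 : 2 * k * q = 2 * k * (q - 1) + 2 * k := by
              have h3 : 2 * k * (q - 1 + 1) = 2 * k * (q - 1) + 2 * k := Nat.mul_succ _ _
              rw [(show q - 1 + 1 = q by omega)] at h3
              exact h3
            rw [hqr, FF_val hk ε (by omega) hrlt,
              (show 2 * k * q + r - 2 * k = 2 * k * (q - 1) + r by omega),
              FF_val hk ε' (by omega) hrlt]
            have hq1 : ε'.toFun (q - 1) = ε.toFun q := by
              have h := hd2 (q - 1) (by omega)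
              rw [(show q - 1 + 1 = q by omega)] at h
              exact h
            rw [(show q - 1 + 1 = q by omega), hq1, hd2 q (by omega)]
          · rw [(FF hk ε).junk i (by rw [FF_len]; omega),
              (FF hk ε').junk (i - 2 * k) (by rw [FF_len]; omega)]
  exact ceq_trans core (ceq_trans (ceq_of_eq eqEnd)
    (ceq_symm (ceq_insG (2 * k) (FF hk ε') (2 * k * j) (2 * k) hp)))

end Aux11
section Aux12

variable {V : Type*} {G : SimpleGraph V} {v w : V} {k : ℕ}

lemma ff_last (hk : 1 ≤ k) (ε ε' : EPath (closedKNbhdComplex G k) v w)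
    (hj1 : 1 ≤ ε.len) (heq : ε.toFun (ε.len - 1) = ε.toFun ε.len)
    (hdel : EDel ε ε' ε.len) :
    CEq (2 * k) (FF hk ε) (FF hk ε') := by
  obtain ⟨hlen, hd1, hd2⟩ := hdel
  have e3 : 2 * k * ε.len = 2 * k * ε'.len + 2 * k := by
    have h : 2 * k * (ε'.len + 1) = 2 * k * ε'.len + 2 * k := Nat.mul_succ _ _
    rw [← hlen] at h
    exact h
  have e1 : 2 * k * ε.len = 2 * k * (ε.len - 1) + 2 * k := by
    have h : 2 * k * (ε.len - 1 + 1) = 2 * k * (ε.len - 1) + 2 * k := Nat.mul_succ _ _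
    rw [(show ε.len - 1 + 1 = ε.len by omega)] at h
    exact h
  have hp : 2 * k * (ε.len - 1) ≤ (FF hk ε').len := by
    rw [FF_len]
    exact mul_le_mul_of_le (by omega)
  refine ceq_symm (ceq_trans (ceq_insG (2 * k) (FF hk ε') (2 * k * (ε.len - 1)) (2 * k) hp)
    (ceq_relB_direct _ _ (2 * k * (ε.len - 1)) (by rw [insG_len, FF_len, FF_len]; omega)
      (by rw [insG_len, FF_len]; omega) ?_ ?_))
  · -- agree below the window
    intro i hi
    rw [insG_toFun, if_pos hi]
    by_cases cL : i < 2 * k * (ε.len - 1)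
    · set q := i / (2 * k) with hq
      set r := i % (2 * k) with hr
      have hqr : i = 2 * k * q + r := by
        rw [hq, hr]
        exact (Nat.div_add_mod _ _).symm
      have hrlt : r < 2 * k := by
        rw [hr]
        exact Nat.mod_lt _ (by omega)
      have hql : q < ε.len - 1 := by
        rw [hq]
        exact Nat.div_lt_of_lt_mul cL
      rw [hqr, FF_val hk ε (by omega) hrlt, FF_val hk ε' (by omega) hrlt,
        hd1 q (by omega), hd1 (q + 1) (by omega)]
    · have hiq : i = 2 * k * (ε.len - 1) := by omega
      have hfm : (FF hk ε').toFun (2 * k * (ε.len - 1)) = ε'.toFun (ε.len - 1) :=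
        FF_mul hk ε' (by omega)
      have hfm2 : (FF hk ε).toFun (2 * k * (ε.len - 1)) = ε.toFun (ε.len - 1) :=
        FF_mul hk ε (by omega)
      rw [hiq, hfm, hfm2, hd1 (ε.len - 1) (by omega)]
  · -- agree above the window
    intro i hi
    rw [insG_toFun, if_neg (by omega)]
    by_cases cE : i ≤ 2 * k * (ε.len - 1) + 2 * k
    · have hie : i = 2 * k * ε.len := by omega
      rw [if_pos cE, hie]
      have hfm : (FF hk ε').toFun (2 * k * (ε.len - 1)) = ε'.toFun (ε.len - 1) :=
        FF_mul hk ε' (by omega)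
      have hfm2 : (FF hk ε).toFun (2 * k * ε.len) = ε.toFun ε.len :=
        FF_mul hk ε le_rfl
      rw [hfm, hfm2, hd1 (ε.len - 1) (by omega), ← heq]
    · rw [if_neg cE]
      rw [(FF hk ε).junk i (by rw [FF_len]; omega),
        (FF hk ε').junk (i - 2 * k) (by rw [FF_len]; omega)]

lemma ff_ehomstep (hk : 1 ≤ k) {ε ε' : EPath (closedKNbhdComplex G k) v w}
    (h : EHomStep (closedKNbhdComplex G k) ε ε') :
    CEq (2 * k) (FF hk ε) (FF hk ε') := by
  rcases h with ⟨j, hj1, hj2, heq, hdel⟩ | ⟨j, hj1, hj2, htr, hdel⟩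
  · by_cases hjl : j = ε.len
    · subst hjl
      exact ff_last hk ε ε' (by omega) heq hdel
    · obtain ⟨-, u, hsub⟩ := ε.edge j (by omega)
      refine ff_main hk ε ε' j hj1 (by omega) hdel u ?_ ?_ ?_
      · rw [heq]
        exact hsub (Set.mem_insert _ _)
      · exact hsub (Set.mem_insert _ _)
      · exact hsub (Set.mem_insert_of_mem _ rfl)
  · obtain ⟨-, u, hsub⟩ := htr
    refine ff_main hk ε ε' j hj1 hj2 hdel u ?_ ?_ ?_
    · exact hsub (Set.mem_insert _ _)
    · exact hsub (Set.mem_insert_of_mem _ (Set.mem_insert _ _))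
    · exact hsub (Set.mem_insert_of_mem _ (Set.mem_insert_of_mem _ rfl))

lemma ff_ehom (hk : 1 ≤ k) {ε ε' : EPath (closedKNbhdComplex G k) v w}
    (h : EHom (closedKNbhdComplex G k) ε ε') :
    CEq (2 * k) (FF hk ε) (FF hk ε') := by
  induction h with
  | rel a b hab => exact ff_ehomstep hk hab
  | refl a => exact ceq_refl _ _
  | symm a b _ ih => exact ceq_symm ih
  | trans a b c _ _ ih1 ih2 => exact ceq_trans ih1 ih2

end Aux12
section Aux13

variable {V : Type*} {G : SimpleGraph V} {u v w : V} {k : ℕ}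

lemma gconcat_toFun (x : GPath G u v) (y : GPath G v w) (i : ℕ) :
    (x.concat y).toFun i = if i < x.len then x.toFun i else y.toFun (i - x.len) := rfl

lemma gconcat_len (x : GPath G u v) (y : GPath G v w) :
    (x.concat y).len = x.len + y.len := rfl

lemma gconcat_left (x : GPath G u v) (y : GPath G v w) {i : ℕ} (hi : i ≤ x.len) :
    (x.concat y).toFun i = x.toFun i := by
  rw [gconcat_toFun]
  by_cases h : i < x.len
  · rw [if_pos h]
  · have : i = x.len := by omega
    rw [if_neg h, this, Nat.sub_self, y.source, x.target]

lemma ceq_concat_right {m : ℕ} (x : GPath G u v) {y y' : GPath G v w}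
    (h : CEq m y y') : CEq m (x.concat y) (x.concat y') := by
  induction h with
  | rel a b hab =>
    rcases hab with ⟨hl, xp, hxp, ha1, ha2⟩ | ⟨hl, i₀, hi₀, hb1, hb2⟩
    · refine ceq_of_relA ⟨by rw [gconcat_len, gconcat_len]; omega, x.len + xp,
        by rw [gconcat_len]; omega, ?_, ?_⟩
      · intro i hi
        rw [gconcat_toFun, gconcat_toFun]
        by_cases h1 : i < x.len
        · rw [if_pos h1, if_pos h1]
        · rw [if_neg h1, if_neg h1]
          exact ha1 (i - x.len) (by omega)
      · intro i hi
        rw [gconcat_toFun, gconcat_toFun, if_neg (by omega), if_neg (by omega)]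
        rw [(show i + 1 - x.len = (i - x.len) + 1 by omega)]
        exact ha2 (i - x.len) (by omega)
    · refine ceq_of_relB ⟨by rw [gconcat_len, gconcat_len]; omega, x.len + i₀,
        by rw [gconcat_len]; omega, ?_, ?_⟩
      · intro i hi
        rw [gconcat_toFun, gconcat_toFun]
        by_cases h1 : i < x.len
        · rw [if_pos h1, if_pos h1]
        · rw [if_neg h1, if_neg h1]
          exact hb1 (i - x.len) (by omega)
      · intro i hi
        rw [gconcat_toFun, gconcat_toFun, if_neg (by omega), if_neg (by omega)]
        exact hb2 (i - x.len) (by omega)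
  | refl a => exact ceq_refl _ _
  | symm a b _ ih => exact ceq_symm ih
  | trans a b c _ _ ih1 ih2 => exact ceq_trans ih1 ih2

lemma ceq_concat_left {m : ℕ} {x x' : GPath G u v} (y : GPath G v w)
    (h : CEq m x x') : CEq m (x.concat y) (x'.concat y) := by
  induction h with
  | rel a b hab =>
    rcases hab with ⟨hl, xp, hxp, ha1, ha2⟩ | ⟨hl, i₀, hi₀, hb1, hb2⟩
    · refine ceq_of_relA ⟨by rw [gconcat_len, gconcat_len]; omega, xp,
        by rw [gconcat_len]; omega, ?_, ?_⟩
      · intro i hi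
        rw [gconcat_left _ _ (by omega), gconcat_left _ _ (by omega)]
        exact ha1 i hi
      · intro i hi
        rw [gconcat_toFun, gconcat_toFun]
        by_cases h1 : i < a.len
        · rw [if_pos h1, if_pos (by omega)]
          exact ha2 i hi
        · rw [if_neg h1, if_neg (by omega)]
          rw [(show i + 1 - b.len = i - a.len by omega)]
    · refine ceq_of_relB ⟨by rw [gconcat_len, gconcat_len]; omega, i₀,
        by rw [gconcat_len]; omega, ?_, ?_⟩
      · intro i hi
        rw [gconcat_toFun, gconcat_toFun]
        by_cases h1 : i < a.len
        · rw [if_pos h1, if_pos (by omega)]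
          exact hb1 i hi
        · rw [if_neg h1, if_neg (by omega), hl]
      · intro i hi
        rw [gconcat_toFun, gconcat_toFun]
        by_cases h1 : i < a.len
        · rw [if_pos h1, if_pos (by omega)]
          exact hb2 i hi
        · rw [if_neg h1, if_neg (by omega), hl]
  | refl a => exact ceq_refl _ _
  | symm a b _ ih => exact ceq_symm ih
  | trans a b c _ _ ih1 ih2 => exact ceq_trans ih1 ih2

lemma ceq_concat {m : ℕ} {x x' : GPath G u v} {y y' : GPath G v w}
    (h1 : CEq m x x') (h2 : CEq m y y') :
    CEq m (x.concat y) (x'.concat y') :=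
  ceq_trans (ceq_concat_left y h1) (ceq_concat_right x' h2)

lemma econcat_toFun {K : Set (Set V)} (a : EPath K u v) (b : EPath K v w) (i : ℕ) :
    (a.concat b).toFun i = if i < a.len then a.toFun i else b.toFun (i - a.len) := rfl

lemma econcat_len {K : Set (Set V)} (a : EPath K u v) (b : EPath K v w) :
    (a.concat b).len = a.len + b.len := rfl

lemma econcat_left {K : Set (Set V)} (a : EPath K u v) (b : EPath K v w) {i : ℕ}
    (hi : i ≤ a.len) : (a.concat b).toFun i = a.toFun i := by
  rw [econcat_toFun]
  by_cases h : i < a.len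
  · rw [if_pos h]
  · have : i = a.len := by omega
    rw [if_neg h, this, Nat.sub_self, b.source, a.target]

lemma FF_concat (hk : 1 ≤ k) (a : EPath (closedKNbhdComplex G k) u v)
    (b : EPath (closedKNbhdComplex G k) v w) :
    FF hk (a.concat b) = (FF hk a).concat (FF hk b) := by
  have emul : 2 * k * (a.len + b.len) = 2 * k * a.len + 2 * k * b.len := Nat.mul_add _ _ _
  refine gpath_ext (by rw [FF_len, gconcat_len, FF_len, FF_len, econcat_len]; omega) ?_
  intro j
  rw [FF_toFun, gconcat_toFun, econcat_len]
  set q := j / (2 * k) with hq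
  set r := j % (2 * k) with hr
  have hqr : j = 2 * k * q + r := by
    rw [hq, hr]
    exact (Nat.div_add_mod _ _).symm
  have hrlt : r < 2 * k := by
    rw [hr]
    exact Nat.mod_lt _ (by omega)
  by_cases c1 : j < 2 * k * a.len
  · have hql : q < a.len := by
      rw [hq]
      exact Nat.div_lt_of_lt_mul c1
    rw [if_pos (by rw [FF_len]; omega : j < (FF hk a).len),
      if_pos (by omega : j < 2 * k * (a.len + b.len))]
    rw [FF_toFun, if_pos c1]
    rw [econcat_left _ _ (by omega : q ≤ a.len), econcat_left _ _ (by omega : q + 1 ≤ a.len)]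
  · rw [if_neg (by rw [FF_len]; omega : ¬ j < (FF hk a).len)]
    by_cases c2 : j < 2 * k * (a.len + b.len)
    · have hql : q < a.len + b.len := by
        rw [hq]
        exact Nat.div_lt_of_lt_mul (by omega)
      have hqge : a.len ≤ q := by
        by_contra hq'
        push_neg at hq'
        have := block_lt (k := k) hq' hrlt
        omega
      rw [if_pos c2, FF_toFun, FF_len]
      have harg : j - 2 * k * a.len = 2 * k * (q - a.len) + r := by
        have h2 : 2 * k * q = 2 * k * (q - a.len) + 2 * k * a.len := by
          have h3 : 2 * k * (q - a.len + a.len) = 2 * k * (q - a.len) + 2 * k * a.len :=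
            Nat.mul_add _ _ _
          rw [(show q - a.len + a.len = q by omega)] at h3
          exact h3
        omega
      have hqb : q - a.len < b.len := by omega
      rw [harg, if_pos (block_lt hqb hrlt), (div_add_mod_block hk hrlt).1,
        (div_add_mod_block hk hrlt).2]
      have e1 : (a.concat b).toFun q = b.toFun (q - a.len) := by
        rw [econcat_toFun, if_neg (by omega)]
      have e2 : (a.concat b).toFun (q + 1) = b.toFun (q - a.len + 1) := by
        rw [econcat_toFun, if_neg (by omega), (show q + 1 - a.len = q - a.len + 1 by omega)]
      rw [e1, e2]
    · rw [if_neg c2, FF_toFun, FF_len, if_neg (by omega)]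

lemma BB_concat (hk : 1 ≤ k) (x : GPath G u v) (y : GPath G v w) :
    BB hk (x.concat y) = (BB hk x).concat (BB hk y) := by
  refine epath_ext (by rw [BB_len, gconcat_len, econcat_len, BB_len, BB_len]) ?_
  intro i
  rw [BB_toFun, gconcat_toFun, econcat_toFun, BB_len, BB_toFun, BB_toFun]

end Aux13
/-- For a based simple graph `(G,v)` and `k ≥ 1`, the edge-path group `E(N^k[G], v)` of the
closed `k`-neighborhood complex is isomorphic to the closed `2k`-fundamental group
`π₁^{2k}[G,v]`: there is a bijection between the set of edge-path homotopy classes of edge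
loops at `v` in `N^k[G]` and the set of `≃_{2k}`-classes of loops of `G` at `v` which
respects concatenation (i.e. a group isomorphism for the concatenation-induced group
structures). -/
theorem edgePathGroup_closedKNbhdComplex_iso_closed2kFundamentalGroup
    {V : Type*} (G : SimpleGraph V) (v : V) (k : ℕ) (hk : 1 ≤ k) :
    ∃ Φ : Quot (EHom (closedKNbhdComplex G k) (v := v) (w := v)) ≃
          Quot (CEq (2 * k) (G := G) (v := v) (w := v)),
      ∀ (a b : EPath (closedKNbhdComplex G k) v v) (x y : GPath G v v),
        Φ (Quot.mk _ a) = Quot.mk _ x → Φ (Quot.mk _ b) = Quot.mk _ y →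
        Φ (Quot.mk _ (a.concat b)) = Quot.mk _ (x.concat y) := by
  have hequiv : Equivalence (CEq (2 * k) (G := G) (v := v) (w := v)) :=
    Relation.EqvGen.is_equivalence _
  refine ⟨⟨Quot.lift (fun ε => Quot.mk (CEq (2 * k)) (FF hk ε))
      (fun a b hab => Quot.sound (ff_ehom hk hab)),
    Quot.lift (fun x => Quot.mk (EHom (closedKNbhdComplex G k)) (BB hk x))
      (fun a b hab => Quot.sound (bb_ceq hk hab)), ?_, ?_⟩, ?_⟩
  · intro q
    induction q using Quot.ind with
    | _ ε => exact Quot.sound (bb_ff hk ε)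
  · intro q
    induction q using Quot.ind with
    | _ x => exact Quot.sound (ceq_symm (ff_bb hk x))
  · intro a b x y hax hby
    have h1 : CEq (2 * k) (FF hk a) x := by
      have h := Quot.eq.mp (hax : Quot.mk (CEq (2 * k)) (FF hk a) = Quot.mk _ x)
      exact (Equivalence.eqvGen_iff hequiv).mp h
    have h2 : CEq (2 * k) (FF hk b) y := by
      have h := Quot.eq.mp (hby : Quot.mk (CEq (2 * k)) (FF hk b) = Quot.mk _ y)
      exact (Equivalence.eqvGen_iff hequiv).mp h
    show Quot.mk (CEq (2 * k)) (FF hk (a.concat b)) = Quot.mk _ (x.concat y)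
    refine Quot.sound ?_
    rw [FF_concat hk a b]
    exact ceq_concat h1 h2
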